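/- arXiv:2306.07733 — 10 statements merged into one kernel-verified Lean document; each statement's English description precedes it below -/
import Mathlib

section
/- For every integer m ≥ 1 and every natural number n ≥ m+1, the backward-shifted Hankel determinant of central binomial coefficients satisfies det(B_{i+j−m})_{i,j=0}^{n−1} = (−1)^{binom(m+1,2)} · 2^{n−m−1} · p_{m+1}(n−m−1); moreover det(B_{i+j−m})_{i,j=0}^{n−1} = 0 for all n with 1 ≤ n ≤ m. -/
open Finset

/-- Central binomial coefficients extended to `ℤ` by `0` for negative indices. -/
def centralBinomZ (n : ℤ) : ℚ := if 0 ≤ n then ((2 * n.toNat).choose n.toNat : ℚ) else 0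

/-- `p_m(x) = ∏_{1 ≤ i ≤ j ≤ m-1} (2x+i+j)/(i+j)`. -/
def pRat (m : ℕ) (x : ℚ) : ℚ :=
  ∏ i ∈ Finset.Icc 1 (m - 1), ∏ j ∈ Finset.Icc i (m - 1),
    (2 * x + (i : ℚ) + (j : ℚ)) / ((i : ℚ) + (j : ℚ))

open Matrix

set_option maxHeartbeats 1000000
set_option linter.unusedTactic false
set_option linter.unreachableTactic false
set_option linter.unnecessarySeqFocus false




lemma cBZ_neg {k : ℤ} (h : k < 0) : centralBinomZ k = 0 := by
  simp [centralBinomZ, not_le.2 h]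

lemma cBZ_nat (k : ℕ) : centralBinomZ k = ((2 * k).choose k : ℚ) := by
  simp [centralBinomZ]

-- Part 2: zero row
lemma part2 (m n : ℕ) (hn : 1 ≤ n) (hnm : n ≤ m) :
    Matrix.det (Matrix.of fun i j : Fin n =>
      centralBinomZ (((i : ℕ) : ℤ) + ((j : ℕ) : ℤ) - (m : ℤ))) = 0 := by
  obtain ⟨n', rfl⟩ : ∃ n', n = n' + 1 := ⟨n - 1, by omega⟩
  apply Matrix.det_eq_zero_of_row_eq_zero 0
  intro j
  apply cBZ_neg
  have hj : (j : ℕ) < n' + 1 := j.isLt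
  simp only [Fin.val_zero]
  push_cast
  omega

-- antitriangular case: n = m+1
lemma detAntiTri (m : ℕ) :
    Matrix.det (Matrix.of fun i j : Fin (m+1) =>
      centralBinomZ (((i : ℕ) : ℤ) + ((j : ℕ) : ℤ) - (m : ℤ))) = (-1 : ℚ) ^ ((m+1).choose 2) := by
  induction m with
  | zero =>
      simp [Matrix.det_fin_one, centralBinomZ]
  | succ m ih =>
      rw [Matrix.det_succ_column_zero]
      rw [Finset.sum_eq_single (Fin.last (m+1))]
      · have h1 : (Matrix.of fun i j : Fin (m+2) =>
            centralBinomZ ((i:ℤ) + (j:ℤ) - ((m:ℤ)+1))) (Fin.last (m+1)) 0 = 1 := by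
          simp [Matrix.of_apply, Fin.val_last, centralBinomZ]
        have h2 : ((Matrix.of fun i j : Fin (m+2) =>
            centralBinomZ ((i:ℤ) + (j:ℤ) - ((m:ℤ)+1))).submatrix (Fin.last (m+1)).succAbove
              Fin.succ) = (Matrix.of fun i j : Fin (m+1) =>
            centralBinomZ ((i:ℤ) + (j:ℤ) - (m:ℤ))) := by
          ext i j
          simp only [Matrix.submatrix_apply, Matrix.of_apply, Fin.succAbove_last,
            Fin.coe_castSucc, Fin.val_succ]
          congr 1
          push_cast
          ring
        push_cast at h1 h2 ⊢
        rw [h1, h2, ih]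
        have hc : (m+2).choose 2 = (m+1).choose 2 + (m+1) := by
          have h : (m+2).choose 2 = (m+1).choose 1 + (m+1).choose 2 :=
            Nat.choose_succ_succ (m+1) 1
          simp only [Nat.choose_one_right] at h
          omega
        rw [hc, pow_add]
        ring
      · intro i _ hi
        have hlt : (i : ℕ) < m + 1 := by
          rcases Fin.lt_or_eq_of_le (Fin.le_last i) with h | h
          · exact_mod_cast h
          · exact absurd h hi
        have h0 : centralBinomZ ((i:ℤ) - ((m:ℤ)+1)) = 0 := by
          apply cBZ_neg
          omega
        simp [h0]
      · intro h
        exact absurd (Finset.mem_univ _) h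


lemma vandB_nat (N i j : ℕ) (hi : i ≤ N) (hj : j ≤ N) :
    (2*i+1 + (2*j+1)).choose (i+j+1)
      = ∑ k ∈ range (N+1), 2 * ((2*i+1).choose (i+1+k)) * ((2*j+1).choose (j+1+k)) := by
  rw [Nat.add_choose_eq]
  rw [Finset.Nat.sum_antidiagonal_eq_sum_range_succ_mk]
  have split : ∀ (f : ℕ → ℕ), ∑ a ∈ range (i+j+1+1), f a
      = (∑ a ∈ Ico 0 (i+1), f a) + ∑ a ∈ Ico (i+1) (i+j+2), f a := by
    intro f
    rw [Finset.sum_Ico_consecutive _ (Nat.zero_le (i+1)) (by omega : i+1 ≤ i+j+2),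
      ← Finset.range_eq_Ico, show i+j+2 = i+j+1+1 by omega]
  rw [split]
  have h2 : ∑ a ∈ Ico (i+1) (i+j+2), (2*i+1).choose a * (2*j+1).choose (i+j+1-a)
      = ∑ k ∈ range (j+1), (2*i+1).choose (i+1+k) * (2*j+1).choose (j+1+k) := by
    rw [Finset.sum_Ico_eq_sum_range]
    rw [show i+j+2 - (i+1) = j+1 by omega]
    refine Finset.sum_congr rfl fun k hk => ?_
    have hk' : k ≤ j := by simp at hk; omega
    congr 1
    have h := Nat.choose_symm (show j+1+k ≤ 2*j+1 by omega)
    rw [show 2*j+1 - (j+1+k) = j - k by omega] at h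
    rw [show i+j+1 - (i+1+k) = j - k by omega, h]
  have h1 : ∑ a ∈ Ico 0 (i+1), (2*i+1).choose a * (2*j+1).choose (i+j+1-a)
      = ∑ k ∈ range (i+1), (2*i+1).choose (i+1+k) * (2*j+1).choose (j+1+k) := by
    rw [← Finset.range_eq_Ico, ← Finset.sum_range_reflect]
    refine Finset.sum_congr rfl fun k hk => ?_
    have hk' : k ≤ i := by simp at hk; omega
    have h := Nat.choose_symm (show i+1+k ≤ 2*i+1 by omega)
    rw [show 2*i+1 - (i+1+k) = i - k by omega] at h
    rw [show i+1-1-k = i - k by omega, show i+j+1 - (i-k) = j+1+k by omega, h]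
  rw [h1, h2]
  have ext1 : ∑ k ∈ range (i+1), (2*i+1).choose (i+1+k) * (2*j+1).choose (j+1+k)
      = ∑ k ∈ range (N+1), (2*i+1).choose (i+1+k) * (2*j+1).choose (j+1+k) := by
    apply Finset.sum_subset
    · intro x hx; simp at hx ⊢; omega
    · intro x _ hx
      simp only [Finset.mem_range, not_lt] at hx
      rw [Nat.choose_eq_zero_of_lt (by omega : 2*i+1 < i+1+x)]
      ring
  have ext2 : ∑ k ∈ range (j+1), (2*i+1).choose (i+1+k) * (2*j+1).choose (j+1+k)
      = ∑ k ∈ range (N+1), (2*i+1).choose (i+1+k) * (2*j+1).choose (j+1+k) := by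
    apply Finset.sum_subset
    · intro x hx; simp at hx ⊢; omega
    · intro x _ hx
      simp only [Finset.mem_range, not_lt] at hx
      rw [Nat.choose_eq_zero_of_lt (by omega : 2*j+1 < j+1+x)]
      ring
  rw [ext1, ext2, ← Finset.sum_add_distrib]
  refine Finset.sum_congr rfl fun k _ => ?_
  ring

lemma vandA_nat (N i j : ℕ) (hi : i ≤ N) (hj : j ≤ N) :
    (2*i + 2*j).choose (i+j)
      = ∑ k ∈ range (N+1), (if k = 0 then 1 else 2) * ((2*i).choose (i+k)) * ((2*j).choose (j+k)) := by
  rw [Nat.add_choose_eq]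
  rw [Finset.Nat.sum_antidiagonal_eq_sum_range_succ_mk]
  have split : ∀ (f : ℕ → ℕ), ∑ a ∈ range (i+j+1), f a
      = (∑ a ∈ Ico 0 i, f a) + ∑ a ∈ Ico i (i+j+1), f a := by
    intro f
    rw [Finset.sum_Ico_consecutive _ (Nat.zero_le i) (by omega : i ≤ i+j+1),
      ← Finset.range_eq_Ico]
  rw [split]
  have h2 : ∑ a ∈ Ico i (i+j+1), (2*i).choose a * (2*j).choose (i+j-a)
      = ∑ k ∈ range (j+1), (2*i).choose (i+k) * (2*j).choose (j+k) := by
    rw [Finset.sum_Ico_eq_sum_range]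
    rw [show i+j+1 - i = j+1 by omega]
    refine Finset.sum_congr rfl fun k hk => ?_
    have hk' : k ≤ j := by simp at hk; omega
    congr 1
    have h := Nat.choose_symm (show j+k ≤ 2*j by omega)
    rw [show 2*j - (j+k) = j - k by omega] at h
    rw [show i+j - (i+k) = j - k by omega, h]
  have h1 : ∑ a ∈ Ico 0 i, (2*i).choose a * (2*j).choose (i+j-a)
      = ∑ k ∈ range i, (2*i).choose (i+1+k) * (2*j).choose (j+1+k) := by
    rw [← Finset.range_eq_Ico, ← Finset.sum_range_reflect]
    refine Finset.sum_congr rfl fun k hk => ?_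
    have hk' : k < i := by simpa using hk
    have h := Nat.choose_symm (show i+1+k ≤ 2*i by omega)
    rw [show 2*i - (i+1+k) = i-1-k by omega] at h
    rw [show i+j - (i-1-k) = j+1+k by omega, h]
  rw [h1, h2]
  have ext1 : ∑ k ∈ range i, (2*i).choose (i+1+k) * (2*j).choose (j+1+k)
      = ∑ k ∈ range N, (2*i).choose (i+1+k) * (2*j).choose (j+1+k) := by
    apply Finset.sum_subset
    · intro x hx; simp at hx ⊢; omega
    · intro x _ hx
      simp only [Finset.mem_range, not_lt] at hx
      rw [Nat.choose_eq_zero_of_lt (by omega : 2*i < i+1+x)]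
      ring
  have ext2 : ∑ k ∈ range (j+1), (2*i).choose (i+k) * (2*j).choose (j+k)
      = ∑ k ∈ range (N+1), (2*i).choose (i+k) * (2*j).choose (j+k) := by
    apply Finset.sum_subset
    · intro x hx; simp at hx ⊢; omega
    · intro x _ hx
      simp only [Finset.mem_range, not_lt] at hx
      rw [Nat.choose_eq_zero_of_lt (by omega : 2*j < j+x)]
      ring
  rw [ext1, ext2]
  rw [Finset.sum_range_succ' (fun k => (2*i).choose (i+k) * (2*j).choose (j+k)) N]
  rw [Finset.sum_range_succ' (fun k => (if k = 0 then 1 else 2) * ((2*i).choose (i+k)) * ((2*j).choose (j+k))) N]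
  simp only [Nat.succ_ne_zero, ite_false, ite_true, if_neg (Nat.succ_ne_zero 0), reduceIte]
  have hsum : ∑ x ∈ range N, 2 * (2*i).choose (i+(x+1)) * (2*j).choose (j+(x+1))
      = ∑ k ∈ range N, (2*i).choose (i+1+k) * (2*j).choose (j+1+k)
        + ∑ k ∈ range N, (2*i).choose (i+(k+1)) * (2*j).choose (j+(k+1)) := by
    rw [← Finset.sum_add_distrib]
    refine Finset.sum_congr rfl fun k _ => ?_
    rw [show i+1+k = i+(k+1) by omega, show j+1+k = j+(k+1) by omega]
    ring
  rw [hsum]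
  ring



lemma baseA (N : ℕ) :
    (Matrix.of fun i j : Fin (N+1) => centralBinomZ (((i : ℕ) + (j : ℕ) : ℕ) : ℤ)).det
      = 2 ^ N := by
  set T : Matrix (Fin (N+1)) (Fin (N+1)) ℚ :=
    Matrix.of fun i k => (((2*(i:ℕ)).choose ((i:ℕ)+(k:ℕ)) : ℕ) : ℚ) with hTdef
  set D : Matrix (Fin (N+1)) (Fin (N+1)) ℚ :=
    Matrix.diagonal (fun k : Fin (N+1) => if (k:ℕ) = 0 then (1:ℚ) else 2) with hDdef
  have hM : (Matrix.of fun i j : Fin (N+1) => centralBinomZ (((i : ℕ) + (j : ℕ) : ℕ) : ℤ))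
      = T * D * Tᵀ := by
    ext i j
    have hmul : (T * D * Tᵀ) i j
        = ∑ k : Fin (N+1), T i k * ((if (k:ℕ) = 0 then (1:ℚ) else 2) * T j k) := by
      rw [Matrix.mul_apply]
      refine Finset.sum_congr rfl fun k _ => ?_
      rw [Matrix.mul_apply]
      rw [Finset.sum_eq_single k]
      · simp [hDdef, Matrix.diagonal, Matrix.transpose_apply]
        ring
      · intro l _ hl
        simp only [mul_eq_zero]
        exact Or.inr (Matrix.diagonal_apply_ne _ hl)
      · intro h; exact absurd (Finset.mem_univ _) h
    rw [Matrix.of_apply, hmul, cBZ_nat]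
    have key := vandA_nat N (i:ℕ) (j:ℕ) (by omega) (by omega)
    have hcast : (((2*((i:ℕ)+(j:ℕ))).choose ((i:ℕ)+(j:ℕ)) : ℕ) : ℚ)
        = ((∑ k ∈ range (N+1), (if k = 0 then 1 else 2)
            * ((2*(i:ℕ)).choose ((i:ℕ)+k)) * ((2*(j:ℕ)).choose ((j:ℕ)+k)) : ℕ) : ℚ) := by
      rw [show 2*((i:ℕ)+(j:ℕ)) = 2*(i:ℕ) + 2*(j:ℕ) by ring, key]
    rw [hcast, Nat.cast_sum, ← Fin.sum_univ_eq_sum_range]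
    refine Finset.sum_congr rfl fun k _ => ?_
    push_cast
    split <;> simp [hTdef] <;> ring
  have hT : T.det = 1 := by
    have htri : T.BlockTriangular OrderDual.toDual := by
      intro i j hij
      have : (i:ℕ) < (j:ℕ) := hij
      simp only [hTdef, Matrix.of_apply]
      rw [Nat.choose_eq_zero_of_lt (by omega)]
      simp
    rw [Matrix.det_of_lowerTriangular T htri]
    apply Finset.prod_eq_one
    intro i _
    simp only [hTdef, Matrix.of_apply]
    rw [show (i:ℕ)+(i:ℕ) = 2*(i:ℕ) by ring, Nat.choose_self]
    simp
  have hD : D.det = 2 ^ N := by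
    rw [hDdef, Matrix.det_diagonal, Fin.prod_univ_succ]
    simp only [Fin.val_zero, if_pos rfl, one_mul]
    have : ∀ k : Fin N, (if ((k.succ : Fin (N+1)):ℕ) = 0 then (1:ℚ) else 2) = 2 := by
      intro k
      rw [if_neg]
      simp [Fin.val_succ]
    rw [Finset.prod_congr rfl fun k _ => this k]
    simp
  rw [hM, Matrix.det_mul, Matrix.det_mul, Matrix.det_transpose, hT, hD]
  ring

lemma baseB (N : ℕ) :
    (Matrix.of fun i j : Fin N => centralBinomZ (((i : ℕ) + (j : ℕ) + 1 : ℕ) : ℤ)).det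
      = 2 ^ N := by
  rcases N with _ | K
  · simp [Matrix.det_isEmpty]
  set T : Matrix (Fin (K+1)) (Fin (K+1)) ℚ :=
    Matrix.of fun i k => (((2*(i:ℕ)+1).choose ((i:ℕ)+1+(k:ℕ)) : ℕ) : ℚ) with hTdef
  set D : Matrix (Fin (K+1)) (Fin (K+1)) ℚ :=
    Matrix.diagonal (fun _ : Fin (K+1) => (2:ℚ)) with hDdef
  have hM : (Matrix.of fun i j : Fin (K+1) => centralBinomZ (((i : ℕ) + (j : ℕ) + 1 : ℕ) : ℤ))
      = T * D * Tᵀ := by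
    ext i j
    have hmul : (T * D * Tᵀ) i j = ∑ k : Fin (K+1), T i k * ((2:ℚ) * T j k) := by
      rw [Matrix.mul_apply]
      refine Finset.sum_congr rfl fun k _ => ?_
      rw [Matrix.mul_apply]
      rw [Finset.sum_eq_single k]
      · simp [hDdef, Matrix.diagonal, Matrix.transpose_apply]
        ring
      · intro l _ hl
        simp only [mul_eq_zero]
        exact Or.inr (Matrix.diagonal_apply_ne _ hl)
      · intro h; exact absurd (Finset.mem_univ _) h
    rw [Matrix.of_apply, hmul, cBZ_nat]
    have key := vandB_nat K (i:ℕ) (j:ℕ) (by omega) (by omega)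
    have hcast : (((2*((i:ℕ)+(j:ℕ)+1)).choose ((i:ℕ)+(j:ℕ)+1) : ℕ) : ℚ)
        = ((∑ k ∈ range (K+1), 2
            * ((2*(i:ℕ)+1).choose ((i:ℕ)+1+k)) * ((2*(j:ℕ)+1).choose ((j:ℕ)+1+k)) : ℕ) : ℚ) := by
      rw [show 2*((i:ℕ)+(j:ℕ)+1) = 2*(i:ℕ)+1 + (2*(j:ℕ)+1) by ring, key]
    rw [hcast, Nat.cast_sum, ← Fin.sum_univ_eq_sum_range]
    refine Finset.sum_congr rfl fun k _ => ?_
    push_cast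
    simp [hTdef]
    ring
  have hT : T.det = 1 := by
    have htri : T.BlockTriangular OrderDual.toDual := by
      intro i j hij
      have : (i:ℕ) < (j:ℕ) := hij
      simp only [hTdef, Matrix.of_apply]
      rw [Nat.choose_eq_zero_of_lt (by omega)]
      simp
    rw [Matrix.det_of_lowerTriangular T htri]
    apply Finset.prod_eq_one
    intro i _
    simp only [hTdef, Matrix.of_apply]
    rw [show (i:ℕ)+1+(i:ℕ) = 2*(i:ℕ)+1 by ring, Nat.choose_self]
    simp
  have hD : D.det = 2 ^ (K+1) := by
    rw [hDdef, Matrix.det_diagonal]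
    simp
  rw [hM, Matrix.det_mul, Matrix.det_mul, Matrix.det_transpose, hT, hD]
  ring



def qf (m y : ℕ) : ℚ :=
  ((2*y+2*m).factorial * m.factorial : ℕ) / (((2*y+m).factorial * (2*m).factorial : ℕ))

def rf (m y : ℕ) : ℚ :=
  ((2*y+2*m).factorial * (2*y+1).factorial : ℕ) / (((2*y+m).factorial * ((2*y+m+1)).factorial : ℕ))

lemma factQ_ne (k : ℕ) : ((k.factorial : ℚ)) ≠ 0 :=
  Nat.cast_ne_zero.2 (Nat.factorial_ne_zero k)

lemma qf_ne (m y : ℕ) : qf m y ≠ 0 := by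
  unfold qf
  push_cast
  apply div_ne_zero <;> exact mul_ne_zero (factQ_ne _) (factQ_ne _)

lemma rf_ne (m y : ℕ) : rf m y ≠ 0 := by
  unfold rf
  push_cast
  apply div_ne_zero <;> exact mul_ne_zero (factQ_ne _) (factQ_ne _)

lemma prodIcc (c t : ℕ) : ∏ i ∈ Icc 1 t, ((c:ℚ) + i) = (c+t).factorial / c.factorial := by
  induction t with
  | zero => simp [div_self (factQ_ne c)]
  | succ t ih =>
      rw [Finset.prod_Icc_succ_top (by omega : 1 ≤ t+1), ih,
        show c + (t+1) = (c+t) + 1 by ring, Nat.factorial_succ]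
      push_cast
      field_simp
      ring

lemma pQ_x (m : ℕ) (x : ℚ) :
    pRat (m+1) x = pRat m x * ∏ i ∈ Icc 1 m, (2*x + (i:ℚ) + m) / ((i:ℚ) + m) := by
  rcases m with _ | t
  · simp [pRat]
  unfold pRat
  rw [show (t+1+1) - 1 = t+1 by omega, show (t+1) - 1 = t by omega]
  rw [Finset.prod_Icc_succ_top (by omega : 1 ≤ t+1)]
  rw [Finset.prod_congr rfl (fun i hi => Finset.prod_Icc_succ_top
      (by simp at hi; omega : i ≤ t+1) (fun j => (2*x + (i:ℚ) + j)/((i:ℚ)+j)))]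
  rw [Finset.prod_mul_distrib]
  rw [Finset.prod_Icc_succ_top (by omega : 1 ≤ t+1)]
  rw [Finset.Icc_self, Finset.prod_singleton]
  push_cast
  ring

lemma pQnat (m y : ℕ) : pRat (m+1) ((y:ℕ):ℚ) = pRat m (y:ℚ) * qf m y := by
  rw [pQ_x]
  congr 1
  have h1 : ∀ i ∈ Icc 1 m, (2*((y:ℕ):ℚ) + (i:ℚ) + m) / ((i:ℚ) + m)
      = (((2*y+m : ℕ):ℚ) + i) / (((m:ℕ):ℚ) + i) := by
    intro i hi
    push_cast
    ring_nf
  rw [Finset.prod_congr rfl h1, Finset.prod_div_distrib, prodIcc, prodIcc]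
  unfold qf
  rw [show 2*y+m+m = 2*y+2*m by ring, show m + m = 2*m by ring]
  push_cast
  field_simp

lemma qrswap (m y : ℕ) : rf m y * qf m (y+1) = qf m y * rf (m+1) y := by
  unfold qf rf
  rw [show 2*(y+1)+2*m = 2*y+2*m+2 by ring, show 2*(y+1)+m = 2*y+m+2 by ring,
    show 2*y+2*(m+1) = 2*y+2*m+2 by ring, show 2*y+(m+1) = 2*y+m+1 by ring,
    show 2*y+m+1+1 = 2*y+m+2 by ring]
  push_cast
  field_simp

lemma pR (m y : ℕ) : pRat m ((y:ℚ)+1) = pRat m (y:ℚ) * rf m y := by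
  induction m generalizing y with
  | zero =>
      have : rf 0 y = 1 := by
        unfold rf
        exact div_self (Nat.cast_ne_zero.2
          (Nat.mul_ne_zero (Nat.factorial_ne_zero _) (Nat.factorial_ne_zero _)))
      simp [pRat, this]
  | succ m ih =>
      have hy1 : ((y:ℚ)+1) = (((y+1 : ℕ)):ℚ) := by push_cast; ring
      rw [hy1, pQnat m (y+1), ← hy1, ih]
      rw [pQnat m y]
      have := qrswap m y
      linear_combination pRat m (y:ℚ) * this

lemma pPos (m y : ℕ) : 0 < pRat m ((y:ℚ)) := by
  unfold pRat
  apply Finset.prod_pos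
  intro i hi
  apply Finset.prod_pos
  intro j hj
  simp only [Finset.mem_Icc] at hi hj
  apply div_pos
  · have : (0:ℚ) ≤ 2*(y:ℚ) := by positivity
    have h1 : (1:ℚ) ≤ (i:ℚ) := by exact_mod_cast hi.1
    have h2 : (0:ℚ) ≤ (j:ℚ) := by positivity
    linarith
  · have h1 : (1:ℚ) ≤ (i:ℚ) := by exact_mod_cast hi.1
    have h2 : (0:ℚ) ≤ (j:ℚ) := by positivity
    linarith

lemma pZero (m : ℕ) : pRat m 0 = 1 := by
  unfold pRat
  apply Finset.prod_eq_one
  intro i hi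
  apply Finset.prod_eq_one
  intro j hj
  simp only [Finset.mem_Icc] at hi hj
  have h1 : (1:ℚ) ≤ (i:ℚ) := by exact_mod_cast hi.1
  have h2 : (0:ℚ) ≤ (j:ℚ) := by positivity
  rw [mul_zero, zero_add]
  exact div_self (by linarith)

lemma starIdent (m y : ℕ) :
    qf (m+2) (y+1) * rf (m+3) y
      = qf (m+2) (y+1) * rf (m+1) (y+1) + qf (m+1) (y+1) * rf (m+3) y := by
  unfold qf rf
  rw [show 2*(y+1)+2*(m+2) = 2*y+2*m+6 by ring, show 2*(y+1)+(m+2) = 2*y+m+4 by ring,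
    show 2*(m+2) = 2*m+4 by ring,
    show 2*y+2*(m+3) = 2*y+2*m+6 by ring, show 2*y+(m+3) = 2*y+m+3 by ring,
    show 2*y+m+3+1 = 2*y+m+4 by ring,
    show 2*(y+1)+2*(m+1) = 2*y+2*m+4 by ring, show 2*(y+1)+(m+1) = 2*y+m+3 by ring,
    show 2*(y+1)+1 = 2*y+3 by ring, show 2*(m+1) = 2*m+2 by ring]
  have e1 : (((2*y+2*m+6).factorial : ℕ) : ℚ)
      = (2*y+2*m+6) * (2*y+2*m+5) * ((2*y+2*m+4).factorial : ℕ) := by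
    rw [show 2*y+2*m+6 = (2*y+2*m+5)+1 by ring, Nat.factorial_succ,
      show 2*y+2*m+5 = (2*y+2*m+4)+1 by ring, Nat.factorial_succ]
    push_cast
    ring
  have e2 : (((m+2).factorial : ℕ) : ℚ) = (m+2) * ((m+1).factorial : ℕ) := by
    rw [Nat.factorial_succ]; push_cast; ring
  have e3 : (((2*m+4).factorial : ℕ) : ℚ) = (2*m+4)*(2*m+3) * ((2*m+2).factorial : ℕ) := by
    rw [show 2*m+4 = (2*m+3)+1 by ring, Nat.factorial_succ,
      show 2*m+3 = (2*m+2)+1 by ring, Nat.factorial_succ]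
    push_cast; ring
  have e4 : (((2*y+m+4).factorial : ℕ) : ℚ) = (2*y+m+4) * ((2*y+m+3).factorial : ℕ) := by
    rw [show 2*y+m+4 = (2*y+m+3)+1 by ring, Nat.factorial_succ]; push_cast; ring
  have e5 : (((2*y+3).factorial : ℕ) : ℚ) = (2*y+3)*(2*y+2) * ((2*y+1).factorial : ℕ) := by
    rw [show 2*y+3 = (2*y+2)+1 by ring, Nat.factorial_succ,
      show 2*y+2 = (2*y+1)+1 by ring, Nat.factorial_succ]
    push_cast; ring
  push_cast
  push_cast at e1 e2 e3 e4 e5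
  rw [e1, e2, e3, e4, e5]
  have n1 := factQ_ne (2*y+2*m+4)
  have n2 := factQ_ne (m+1)
  have n3 := factQ_ne (2*m+2)
  have n4 := factQ_ne (2*y+m+3)
  have n5 := factQ_ne (2*y+1)
  push_cast at n1 n2 n3 n4 n5
  field_simp
  ring

lemma dagger (m y : ℕ) :
    pRat (m+3) ((y:ℚ)+1) * pRat (m+1) ((y:ℚ)+1)
      = pRat (m+3) ((y:ℚ)) * pRat (m+1) ((y:ℚ)+2) + pRat (m+2) ((y:ℚ)+1)^2 := by
  have hy1 : ((y:ℚ)+1) = (((y+1 : ℕ)):ℚ) := by push_cast; ring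
  have e1 : pRat (m+3) ((y:ℚ)+1) = pRat (m+3) ((y:ℚ)) * rf (m+3) y := pR (m+3) y
  have e2 : pRat (m+2) ((y:ℚ)+1) = pRat (m+1) ((y:ℚ)+1) * qf (m+1) (y+1) := by
    rw [hy1]; exact pQnat (m+1) (y+1)
  have e3 : pRat (m+3) ((y:ℚ)+1) = pRat (m+2) ((y:ℚ)+1) * qf (m+2) (y+1) := by
    rw [hy1]; exact pQnat (m+2) (y+1)
  have e4 : pRat (m+1) ((y:ℚ)+2) = pRat (m+1) ((y:ℚ)+1) * rf (m+1) (y+1) := by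
    have := pR (m+1) (y+1)
    rw [← hy1] at this
    rw [show ((y:ℚ)+2) = ((y:ℚ)+1)+1 by ring]
    exact this
  have hstar := starIdent m y
  have main : pRat (m+3) ((y:ℚ)+1) * pRat (m+1) ((y:ℚ)+1) * rf (m+3) y
      = pRat (m+3) ((y:ℚ)+1) * pRat (m+1) ((y:ℚ)+2)
        + pRat (m+2) ((y:ℚ)+1)^2 * rf (m+3) y := by
    rw [e3, e2, e4]
    linear_combination (pRat (m+1) ((y:ℚ)+1))^2 * qf (m+1) (y+1) * hstar
  have goal_mul : (pRat (m+3) ((y:ℚ)+1) * pRat (m+1) ((y:ℚ)+1)) * rf (m+3) y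
      = (pRat (m+3) ((y:ℚ)) * pRat (m+1) ((y:ℚ)+2) + pRat (m+2) ((y:ℚ)+1)^2) * rf (m+3) y := by
    linear_combination main + pRat (m+1) ((y:ℚ)+2) * e1
  exact mul_right_cancel₀ (rf_ne (m+3) y) goal_mul

def Fq (m t : ℕ) : ℚ := (-1)^((m+1).choose 2) * 2^t * pRat (m+1) ((t:ℕ):ℚ)

lemma Fq_ne (m t : ℕ) : Fq m t ≠ 0 := by
  unfold Fq
  apply mul_ne_zero
  apply mul_ne_zero
  · apply pow_ne_zero; norm_num
  · apply pow_ne_zero; norm_num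
  · exact ne_of_gt (pPos (m+1) t)

lemma Fq0 (t : ℕ) : Fq 0 t = 2^t := by
  unfold Fq
  have : pRat 1 ((t:ℕ):ℚ) = 1 := by simp [pRat]
  rw [this]
  norm_num

lemma FqBase (m : ℕ) : Fq m 0 = (-1)^((m+1).choose 2) := by
  unfold Fq
  rw [Nat.cast_zero, pZero]
  ring

lemma chooseStep2 (m : ℕ) : (m+3).choose 2 = (m+1).choose 2 + (2*m+3) := by
  have h1 : (m+3).choose 2 = (m+2).choose 1 + (m+2).choose 2 := Nat.choose_succ_succ (m+2) 1
  have h2 : (m+2).choose 2 = (m+1).choose 1 + (m+1).choose 2 := Nat.choose_succ_succ (m+1) 1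
  simp only [Nat.choose_one_right] at h1 h2
  omega

lemma FqDJ (m t : ℕ) :
    Fq (m+2) (t+1) * Fq m (t+1) = Fq (m+2) t * Fq m (t+2) - Fq (m+1) (t+1)^2 := by
  have hsign : ((-1:ℚ)^((m+3).choose 2)) * ((-1:ℚ)^((m+1).choose 2)) = -1 := by
    rw [chooseStep2 m, pow_add, mul_comm, ← mul_assoc, ← pow_add]
    rw [show (m+1).choose 2 + (m+1).choose 2 = 2 * ((m+1).choose 2) by ring]
    rw [pow_mul]
    norm_num
    exact Odd.neg_one_pow ⟨m+1, by ring⟩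
  have hs1 : (((-1:ℚ)^((m+2).choose 2)))^2 = 1 := by
    rw [← pow_mul, mul_comm, pow_mul]
    norm_num
  have hd := dagger m t
  unfold Fq
  push_cast
  rw [show (m+2+1) = m+3 by ring, show (m+1+1) = m+2 by ring]
  linear_combination (4*(2:ℚ)^t*(2:ℚ)^t) * (pRat (m+3) ((t:ℚ)+1) * pRat (m+1) ((t:ℚ)+1)
      - pRat (m+3) ((t:ℚ)) * pRat (m+1) ((t:ℚ)+2)) * hsign
    + (4*(2:ℚ)^t*(2:ℚ)^t) * (pRat (m+2) ((t:ℚ)+1))^2 * hs1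
    - (4*(2:ℚ)^t*(2:ℚ)^t) * hd

lemma prat2 (x : ℚ) : pRat 2 x = x + 1 := by
  simp [pRat]
  ring_nf

lemma Fq1DJ (t : ℕ) :
    Fq 1 (t+1) * 2^(t+1) = Fq 1 t * 2^(t+2) - ((2:ℚ)^(t+1))^2 := by
  unfold Fq
  rw [prat2, prat2]
  have : ((1:ℕ)+1).choose 2 = 1 := by decide
  rw [this]
  push_cast
  ring


section DJ

variable (a : ℤ → ℚ) (n : ℕ)

def φ2 : Fin n ⊕ Fin 2 → Fin (n+2) :=
  Sum.elim (fun i => ⟨(i:ℕ)+1, by omega⟩)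
    (fun s => if s = 0 then ⟨0, by omega⟩ else ⟨n+1, by omega⟩)

def φ0 : Fin n ⊕ Fin 1 → Fin (n+1) :=
  Sum.elim (fun i => ⟨(i:ℕ)+1, by omega⟩) (fun _ => ⟨0, by omega⟩)

def φl : Fin n ⊕ Fin 1 → Fin (n+1) :=
  Sum.elim (fun i => ⟨(i:ℕ), by omega⟩) (fun _ => ⟨n, by omega⟩)

lemma φ2_bij : Function.Bijective (φ2 n) := by
  rw [Fintype.bijective_iff_injective_and_card]
  refine ⟨?_, by simp⟩
  rintro (x | x) (y | y) h <;>
    simp only [φ2, Sum.elim_inl, Sum.elim_inr] at h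
  · simp only [Fin.mk.injEq] at h
    exact congrArg Sum.inl (Fin.ext (by omega))
  · split at h <;> (simp only [Fin.mk.injEq] at h; omega)
  · split at h <;> (simp only [Fin.mk.injEq] at h; omega)
  · congr 1
    fin_cases x <;> fin_cases y <;> simp_all [Fin.ext_iff] <;> omega

lemma φ0_bij : Function.Bijective (φ0 n) := by
  rw [Fintype.bijective_iff_injective_and_card]
  refine ⟨?_, by simp⟩
  rintro (x | x) (y | y) h <;>
    simp only [φ0, Sum.elim_inl, Sum.elim_inr, Fin.mk.injEq] at h
  · exact congrArg Sum.inl (Fin.ext (by omega))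
  · omega
  · omega
  · congr 1; exact Subsingleton.elim x y

lemma φl_bij : Function.Bijective (φl n) := by
  rw [Fintype.bijective_iff_injective_and_card]
  refine ⟨?_, by simp⟩
  rintro (x | x) (y | y) h <;>
    simp only [φl, Sum.elim_inl, Sum.elim_inr, Fin.mk.injEq] at h
  · exact congrArg Sum.inl (Fin.ext (by omega))
  · exact absurd h (by omega)
  · exact absurd h (by omega)
  · congr 1; exact Subsingleton.elim x y

def Cm : Matrix (Fin n) (Fin n) ℚ :=
  Matrix.of fun i j => a (((i:ℕ):ℤ) + ((j:ℕ):ℤ) + 2)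

def wout : Fin 2 → ℕ := fun s => if s = 0 then 0 else n+1

def Bmx : Matrix (Fin n) (Fin 2) ℚ :=
  Matrix.of fun i s => a (((i:ℕ):ℤ) + 1 + (wout n s : ℤ))

def Rmx : Matrix (Fin 2) (Fin n) ℚ :=
  Matrix.of fun s j => a ((wout n s : ℤ) + ((j:ℕ):ℤ) + 1)

def Dmx : Matrix (Fin 2) (Fin 2) ℚ :=
  Matrix.of fun s t => a ((wout n s : ℤ) + (wout n t : ℤ))

end DJ

section DJ2

variable (a : ℤ → ℚ) (n : ℕ)

lemma hankelDJ (hC : (Cm a n).det ≠ 0) :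
    (Matrix.of fun i j : Fin (n+2) => a (((i:ℕ):ℤ) + ((j:ℕ):ℤ))).det * (Cm a n).det
      = (Matrix.of fun i j : Fin (n+1) => a (((i:ℕ):ℤ) + ((j:ℕ):ℤ))).det
        * (Matrix.of fun i j : Fin (n+1) => a (((i:ℕ):ℤ) + ((j:ℕ):ℤ) + 2)).det
      - (Matrix.of fun i j : Fin (n+1) => a (((i:ℕ):ℤ) + ((j:ℕ):ℤ) + 1)).det ^ 2 := by
  classical
  set H2 := Matrix.of fun i j : Fin (n+2) => a (((i:ℕ):ℤ) + ((j:ℕ):ℤ)) with hH2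
  set H0 := Matrix.of fun i j : Fin (n+1) => a (((i:ℕ):ℤ) + ((j:ℕ):ℤ)) with hH0
  set Hs2 := Matrix.of fun i j : Fin (n+1) => a (((i:ℕ):ℤ) + ((j:ℕ):ℤ) + 2) with hHs2
  set Hs1 := Matrix.of fun i j : Fin (n+1) => a (((i:ℕ):ℤ) + ((j:ℕ):ℤ) + 1) with hHs1
  letI : Invertible (Cm a n) :=
    (Cm a n).invertibleOfIsUnitDet (isUnit_iff_ne_zero.2 hC)
  set S : Matrix (Fin 2) (Fin 2) ℚ := Dmx a n - Rmx a n * (Cm a n)⁻¹ * Bmx a n with hS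
  -- symmetry of S
  have hCsymm : (Cm a n)ᵀ = Cm a n := by
    ext i j; simp only [Matrix.transpose_apply, Cm, Matrix.of_apply]; congr 1; ring
  have hBR : (Bmx a n)ᵀ = Rmx a n := by
    ext s i; simp only [Matrix.transpose_apply, Bmx, Rmx, Matrix.of_apply]; congr 1; ring
  have hRB : (Rmx a n)ᵀ = Bmx a n := by rw [← hBR, Matrix.transpose_transpose]
  have hDsymm : (Dmx a n)ᵀ = Dmx a n := by
    ext s t; simp only [Matrix.transpose_apply, Dmx, Matrix.of_apply]; congr 1; ring
  have hSsymm : S 0 1 = S 1 0 := by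
    have hSt : Sᵀ = S := by
      rw [hS, Matrix.transpose_sub, hDsymm, Matrix.transpose_mul, Matrix.transpose_mul,
        Matrix.transpose_nonsing_inv, hCsymm, hBR, hRB, Matrix.mul_assoc]
    calc S 0 1 = Sᵀ 1 0 := rfl
    _ = S 1 0 := by rw [hSt]
  -- the big matrix
  have hXent : ∀ x y, (fromBlocks (Cm a n) (Bmx a n) (Rmx a n) (Dmx a n)) x y
      = H2 (φ2 n x) (φ2 n y) := by
    rintro (i | s) (j | t)
    · simp only [fromBlocks_apply₁₁, Cm, φ2, Sum.elim_inl, Matrix.of_apply, hH2]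
      congr 1 <;> (first | (push_cast; ring) | omega)
    · simp only [fromBlocks_apply₁₂, Bmx, φ2, Sum.elim_inl, Sum.elim_inr, Matrix.of_apply, hH2,
        wout]
      fin_cases t <;> simp <;> (try (congr 1 <;> (first | (push_cast; ring) | omega)))
    · simp only [fromBlocks_apply₂₁, Rmx, φ2, Sum.elim_inl, Sum.elim_inr, Matrix.of_apply, hH2,
        wout]
      fin_cases s <;> simp <;> (try (congr 1 <;> (first | (push_cast; ring) | omega)))
    · simp only [fromBlocks_apply₂₂, Dmx, φ2, Sum.elim_inr, Matrix.of_apply, hH2, wout]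
      fin_cases s <;> fin_cases t <;> simp <;> (try (congr 1 <;> (first | (push_cast; ring) | omega)))
  have hdet2 : H2.det = (Cm a n).det * S.det := by
    have h1 : fromBlocks (Cm a n) (Bmx a n) (Rmx a n) (Dmx a n)
        = H2.submatrix (Equiv.ofBijective _ (φ2_bij n)) (Equiv.ofBijective _ (φ2_bij n)) := by
      ext x y; exact hXent x y
    have h2 : (fromBlocks (Cm a n) (Bmx a n) (Rmx a n) (Dmx a n)).det = H2.det := by
      rw [h1]; exact Matrix.det_submatrix_equiv_self _ _
    rw [← h2, Matrix.det_fromBlocks₁₁, Matrix.invOf_eq_nonsing_inv, ← hS]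
  -- minor H0 : Schur entry S00
  have hmin0 : H0.det = (Cm a n).det * S 0 0 := by
    set B0 : Matrix (Fin n) (Fin 1) ℚ := Matrix.of fun i _ => Bmx a n i 0 with hB0
    set R0 : Matrix (Fin 1) (Fin n) ℚ := Matrix.of fun _ j => Rmx a n 0 j with hR0
    set D0 : Matrix (Fin 1) (Fin 1) ℚ := Matrix.of fun _ _ => Dmx a n 0 0 with hD0
    have hent : ∀ x y, (fromBlocks (Cm a n) B0 R0 D0) x y = H0 (φ0 n x) (φ0 n y) := by
      rintro (i | s) (j | t)
      · simp only [fromBlocks_apply₁₁, Cm, φ0, Sum.elim_inl, Matrix.of_apply, hH0]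
        congr 1 <;> (first | (push_cast; ring) | omega)
      · simp only [fromBlocks_apply₁₂, hB0, Bmx, φ0, Sum.elim_inl, Sum.elim_inr,
          Matrix.of_apply, hH0, wout]
        simp
        all_goals (congr 1 <;> (first | (push_cast; ring) | omega))
      · simp only [fromBlocks_apply₂₁, hR0, Rmx, φ0, Sum.elim_inl, Sum.elim_inr,
          Matrix.of_apply, hH0, wout]
        simp
        all_goals (congr 1 <;> (first | (push_cast; ring) | omega))
      · simp only [fromBlocks_apply₂₂, hD0, Dmx, φ0, Sum.elim_inr, Matrix.of_apply, hH0, wout]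
        simp
    have h2 : (fromBlocks (Cm a n) B0 R0 D0).det = H0.det := by
      have h1 : fromBlocks (Cm a n) B0 R0 D0
          = H0.submatrix (Equiv.ofBijective _ (φ0_bij n)) (Equiv.ofBijective _ (φ0_bij n)) := by
        ext x y; exact hent x y
      rw [h1]; exact Matrix.det_submatrix_equiv_self _ _
    rw [← h2, Matrix.det_fromBlocks₁₁, Matrix.invOf_eq_nonsing_inv]
    congr 1
    rw [Matrix.det_fin_one]
    simp only [hS, Matrix.sub_apply, Matrix.mul_apply, hD0, hR0, hB0, Matrix.of_apply]
  -- minor Hs2 : Schur entry S11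
  have hmin2 : Hs2.det = (Cm a n).det * S 1 1 := by
    set B1 : Matrix (Fin n) (Fin 1) ℚ := Matrix.of fun i _ => Bmx a n i 1 with hB1
    set R1 : Matrix (Fin 1) (Fin n) ℚ := Matrix.of fun _ j => Rmx a n 1 j with hR1
    set D1 : Matrix (Fin 1) (Fin 1) ℚ := Matrix.of fun _ _ => Dmx a n 1 1 with hD1
    have hent : ∀ x y, (fromBlocks (Cm a n) B1 R1 D1) x y = Hs2 (φl n x) (φl n y) := by
      rintro (i | s) (j | t)
      · simp only [fromBlocks_apply₁₁, Cm, φl, Sum.elim_inl, Matrix.of_apply, hHs2]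
      · simp only [fromBlocks_apply₁₂, hB1, Bmx, φl, Sum.elim_inl, Sum.elim_inr,
          Matrix.of_apply, hHs2, wout]
        simp
        all_goals (congr 1 <;> (first | (push_cast; ring) | omega))
      · simp only [fromBlocks_apply₂₁, hR1, Rmx, φl, Sum.elim_inl, Sum.elim_inr,
          Matrix.of_apply, hHs2, wout]
        simp
        all_goals (congr 1 <;> (first | (push_cast; ring) | omega))
      · simp only [fromBlocks_apply₂₂, hD1, Dmx, φl, Sum.elim_inr, Matrix.of_apply, hHs2, wout]
        simp
        all_goals (congr 1 <;> (first | (push_cast; ring) | omega))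
    have h2 : (fromBlocks (Cm a n) B1 R1 D1).det = Hs2.det := by
      have h1 : fromBlocks (Cm a n) B1 R1 D1
          = Hs2.submatrix (Equiv.ofBijective _ (φl_bij n)) (Equiv.ofBijective _ (φl_bij n)) := by
        ext x y; exact hent x y
      rw [h1]; exact Matrix.det_submatrix_equiv_self _ _
    rw [← h2, Matrix.det_fromBlocks₁₁, Matrix.invOf_eq_nonsing_inv]
    congr 1
    rw [Matrix.det_fin_one]
    simp only [hS, Matrix.sub_apply, Matrix.mul_apply, hD1, hR1, hB1, Matrix.of_apply]
  -- middle minor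
  have hmin1 : Hs1.det ^ 2 = (Cm a n).det ^ 2 * (S 0 1 * S 1 0) := by
    set B0 : Matrix (Fin n) (Fin 1) ℚ := Matrix.of fun i _ => Bmx a n i 0 with hB0
    set R1 : Matrix (Fin 1) (Fin n) ℚ := Matrix.of fun _ j => Rmx a n 1 j with hR1
    set D10 : Matrix (Fin 1) (Fin 1) ℚ := Matrix.of fun _ _ => Dmx a n 1 0 with hD10
    have hent : ∀ x y, (fromBlocks (Cm a n) B0 R1 D10) x y = Hs1 (φl n x) (φ0 n y) := by
      rintro (i | s) (j | t)
      · simp only [fromBlocks_apply₁₁, Cm, φl, φ0, Sum.elim_inl, Matrix.of_apply, hHs1]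
        congr 1 <;> (first | (push_cast; ring) | omega)
      · simp only [fromBlocks_apply₁₂, hB0, Bmx, φl, φ0, Sum.elim_inl, Sum.elim_inr,
          Matrix.of_apply, hHs1, wout]
        simp
        all_goals (congr 1 <;> (first | (push_cast; ring) | omega))
      · simp only [fromBlocks_apply₂₁, hR1, Rmx, φl, φ0, Sum.elim_inl, Sum.elim_inr,
          Matrix.of_apply, hHs1, wout]
        simp
        all_goals (congr 1 <;> (first | (push_cast; ring) | omega))
      · simp only [fromBlocks_apply₂₂, hD10, Dmx, φl, φ0, Sum.elim_inr, Matrix.of_apply,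
          hHs1, wout]
        simp
        all_goals (congr 1 <;> (first | (push_cast; ring) | omega))
    set el := Equiv.ofBijective _ (φl_bij n) with hel
    set e0 := Equiv.ofBijective _ (φ0_bij n) with he0
    set τ : Equiv.Perm (Fin n ⊕ Fin 1) := e0.trans el.symm with hτ
    have hXsub : fromBlocks (Cm a n) B0 R1 D10
        = (Hs1.submatrix el el).submatrix id τ := by
      ext x y
      rw [hent x y]
      simp only [Matrix.submatrix_apply, id_eq]
      congr 1
      show φ0 n y = φl n (τ y)
      rw [hτ]
      simp only [Equiv.trans_apply]
      have : el (el.symm (e0 y)) = e0 y := el.apply_symm_apply _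
      calc φ0 n y = e0 y := rfl
      _ = el (el.symm (e0 y)) := (el.apply_symm_apply _).symm
      _ = φl n (el.symm (e0 y)) := rfl
    have hdetX1 : (fromBlocks (Cm a n) B0 R1 D10).det
        = (Equiv.Perm.sign τ : ℤ) * Hs1.det := by
      rw [hXsub, Matrix.det_permute', Matrix.det_submatrix_equiv_self]
    have hdetX1' : (fromBlocks (Cm a n) B0 R1 D10).det = (Cm a n).det * S 1 0 := by
      rw [Matrix.det_fromBlocks₁₁, Matrix.invOf_eq_nonsing_inv]
      congr 1
      rw [Matrix.det_fin_one]
      simp only [hS, Matrix.sub_apply, Matrix.mul_apply, hD10, hR1, hB0, Matrix.of_apply]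
    have hsq : ((Equiv.Perm.sign τ : ℤ) : ℚ)^2 = 1 := by
      rcases Int.units_eq_one_or (Equiv.Perm.sign τ) with h | h <;> rw [h] <;> norm_num
    have : (((Equiv.Perm.sign τ : ℤ) : ℚ) * Hs1.det)^2 = ((Cm a n).det * S 1 0)^2 := by
      rw [← hdetX1', hdetX1]
    rw [mul_pow, hsq, one_mul] at this
    rw [this, hSsymm]
    ring
  rw [hdet2, hmin0, hmin2, hmin1, Matrix.det_fin_two]
  ring

end DJ2

def Dz (m N : ℕ) : ℚ :=
  (Matrix.of fun i j : Fin N => centralBinomZ (((i:ℕ):ℤ) + ((j:ℕ):ℤ) - (m:ℤ))).det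

lemma DzSize (m : ℕ) {N M : ℕ} (h : N = M) : Dz m N = Dz m M := by subst h; rfl

lemma DzAnti (m : ℕ) : Dz m (m+1) = (-1 : ℚ)^((m+1).choose 2) := detAntiTri m

lemma DJz (m n : ℕ) (h : Dz m n ≠ 0) :
    Dz (m+2) (n+2) * Dz m n
      = Dz (m+2) (n+1) * Dz m (n+1) - Dz (m+1) (n+1)^2 := by
  have key := hankelDJ (fun k => centralBinomZ (k - ((m:ℤ)+2))) n ?_
  · have e2 : (Matrix.of fun i j : Fin (n+2) =>
        (fun k => centralBinomZ (k - ((m:ℤ)+2))) (((i:ℕ):ℤ) + ((j:ℕ):ℤ))) = Matrix.of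
          fun i j : Fin (n+2) => centralBinomZ (((i:ℕ):ℤ) + ((j:ℕ):ℤ) - ((m+2 : ℕ):ℤ)) := by
      ext i j
      simp only [Matrix.of_apply]
      congr 1 <;> (first | (push_cast; ring) | omega)
    have e0 : (Matrix.of fun i j : Fin (n+1) =>
        (fun k => centralBinomZ (k - ((m:ℤ)+2))) (((i:ℕ):ℤ) + ((j:ℕ):ℤ))) = Matrix.of
          fun i j : Fin (n+1) => centralBinomZ (((i:ℕ):ℤ) + ((j:ℕ):ℤ) - ((m+2 : ℕ):ℤ)) := by
      ext i j
      simp only [Matrix.of_apply]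
      congr 1 <;> (first | (push_cast; ring) | omega)
    have es2 : (Matrix.of fun i j : Fin (n+1) =>
        (fun k => centralBinomZ (k - ((m:ℤ)+2))) (((i:ℕ):ℤ) + ((j:ℕ):ℤ) + 2)) = Matrix.of
          fun i j : Fin (n+1) => centralBinomZ (((i:ℕ):ℤ) + ((j:ℕ):ℤ) - ((m : ℕ):ℤ)) := by
      ext i j
      simp only [Matrix.of_apply]
      congr 1 <;> (first | (push_cast; ring) | omega)
    have es1 : (Matrix.of fun i j : Fin (n+1) =>
        (fun k => centralBinomZ (k - ((m:ℤ)+2))) (((i:ℕ):ℤ) + ((j:ℕ):ℤ) + 1)) = Matrix.of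
          fun i j : Fin (n+1) => centralBinomZ (((i:ℕ):ℤ) + ((j:ℕ):ℤ) - ((m+1 : ℕ):ℤ)) := by
      ext i j
      simp only [Matrix.of_apply]
      congr 1 <;> (first | (push_cast; ring) | omega)
    have ec : (Cm (fun k => centralBinomZ (k - ((m:ℤ)+2))) n) = Matrix.of
          fun i j : Fin n => centralBinomZ (((i:ℕ):ℤ) + ((j:ℕ):ℤ) - ((m : ℕ):ℤ)) := by
      ext i j
      simp only [Cm, Matrix.of_apply]
      congr 1 <;> (first | (push_cast; ring) | omega)
    rw [e2, e0, es2, es1, ec] at key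
    exact key
  · have ec : (Cm (fun k => centralBinomZ (k - ((m:ℤ)+2))) n) = Matrix.of
          fun i j : Fin n => centralBinomZ (((i:ℕ):ℤ) + ((j:ℕ):ℤ) - ((m : ℕ):ℤ)) := by
      ext i j
      simp only [Cm, Matrix.of_apply]
      congr 1 <;> (first | (push_cast; ring) | omega)
    rw [ec]
    exact h

lemma baseA' (N : ℕ) : Dz 0 (N+1) = 2^N := by
  unfold Dz
  have e : (Matrix.of fun i j : Fin (N+1) =>
      centralBinomZ (((i:ℕ):ℤ) + ((j:ℕ):ℤ) - ((0:ℕ):ℤ)))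
      = Matrix.of fun i j : Fin (N+1) => centralBinomZ (((i : ℕ) + (j : ℕ) : ℕ) : ℤ) := by
    ext i j
    simp only [Matrix.of_apply]
    congr 1 <;> (first | (push_cast; ring) | omega)
  rw [e]
  exact baseA N

lemma master (m : ℕ) : ∀ t N : ℕ, N = m+1+t → Dz m N = Fq m t := by
  induction m using Nat.strong_induction_on with
  | _ m ih =>
    match m with
    | 0 =>
        intro t N hN
        rw [DzSize 0 (show N = t+1 by omega), baseA' t, Fq0]
    | 1 =>
        intro t
        induction t with
        | zero =>
            intro N hN
            rw [DzSize 1 (show N = 1+1 by omega), DzAnti 1, FqBase]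
        | succ t iht =>
            intro N hN
            rw [DzSize 1 (show N = (t+1)+2 by omega)]
            have hBB : ∀ M : ℕ, (Matrix.of fun i j : Fin M =>
                (fun k => centralBinomZ (k - (1:ℤ))) (((i:ℕ):ℤ) + ((j:ℕ):ℤ) + 2)).det
                = 2 ^ M := by
              intro M
              have e : (Matrix.of fun i j : Fin M =>
                  (fun k => centralBinomZ (k - (1:ℤ))) (((i:ℕ):ℤ) + ((j:ℕ):ℤ) + 2))
                  = Matrix.of fun i j : Fin M =>
                    centralBinomZ (((i : ℕ) + (j : ℕ) + 1 : ℕ) : ℤ) := by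
                ext i j
                simp only [Matrix.of_apply]
                congr 1 <;> (first | (push_cast; ring) | omega)
              rw [e, baseB M]
            have key := hankelDJ (fun k => centralBinomZ (k - (1:ℤ))) (t+1) ?_
            · have e2 : (Matrix.of fun i j : Fin ((t+1)+2) =>
                  (fun k => centralBinomZ (k - (1:ℤ))) (((i:ℕ):ℤ) + ((j:ℕ):ℤ)))
                  = Matrix.of fun i j : Fin ((t+1)+2) =>
                    centralBinomZ (((i:ℕ):ℤ) + ((j:ℕ):ℤ) - ((1:ℕ):ℤ)) := by
                ext i j
                simp only [Matrix.of_apply]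
                congr 1 <;> (first | (push_cast; ring) | omega)
              have e0 : (Matrix.of fun i j : Fin ((t+1)+1) =>
                  (fun k => centralBinomZ (k - (1:ℤ))) (((i:ℕ):ℤ) + ((j:ℕ):ℤ)))
                  = Matrix.of fun i j : Fin ((t+1)+1) =>
                    centralBinomZ (((i:ℕ):ℤ) + ((j:ℕ):ℤ) - ((1:ℕ):ℤ)) := by
                ext i j
                simp only [Matrix.of_apply]
                congr 1 <;> (first | (push_cast; ring) | omega)
              have es1 : (Matrix.of fun i j : Fin ((t+1)+1) =>
                  (fun k => centralBinomZ (k - (1:ℤ))) (((i:ℕ):ℤ) + ((j:ℕ):ℤ) + 1))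
                  = Matrix.of fun i j : Fin ((t+1)+1) =>
                    centralBinomZ (((i : ℕ) + (j : ℕ) : ℕ) : ℤ) := by
                ext i j
                simp only [Matrix.of_apply]
                congr 1 <;> (first | (push_cast; ring) | omega)
              have eCm : (Cm (fun k => centralBinomZ (k - (1:ℤ))) (t+1)).det = 2^(t+1) := by
                rw [show Cm (fun k => centralBinomZ (k - (1:ℤ))) (t+1)
                    = Matrix.of (fun i j : Fin (t+1) =>
                      (fun k => centralBinomZ (k - (1:ℤ))) (((i:ℕ):ℤ) + ((j:ℕ):ℤ) + 2)) from rfl,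
                  hBB (t+1)]
              rw [e2, e0, es1, hBB ((t+1)+1), baseA (t+1), eCm] at key
              have hH0 : (Matrix.of fun i j : Fin ((t+1)+1) =>
                  centralBinomZ (((i:ℕ):ℤ) + ((j:ℕ):ℤ) - ((1:ℕ):ℤ))).det = Fq 1 t :=
                iht ((t+1)+1) (by omega)
              rw [hH0] at key
              have hfq := Fq1DJ t
              have hkey2 : Dz 1 ((t+1)+2) * 2^(t+1) = Fq 1 (t+1) * 2^(t+1) := by
                unfold Dz
                rw [key, hfq]
              exact mul_right_cancel₀ (pow_ne_zero _ (by norm_num : (2:ℚ) ≠ 0)) hkey2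
            · rw [show Cm (fun k => centralBinomZ (k - (1:ℤ))) (t+1)
                  = Matrix.of (fun i j : Fin (t+1) =>
                    (fun k => centralBinomZ (k - (1:ℤ))) (((i:ℕ):ℤ) + ((j:ℕ):ℤ) + 2)) from rfl,
                hBB (t+1)]
              positivity
    | (m+2) =>
        intro t
        induction t with
        | zero =>
            intro N hN
            rw [DzSize (m+2) (show N = (m+2)+1 by omega), DzAnti (m+2), FqBase]
        | succ t iht =>
            intro N hN
            rw [DzSize (m+2) (show N = (m+t+2)+2 by omega)]
            have hInner : Dz m (m+t+2) = Fq m (t+1) := ih m (by omega) (t+1) _ (by omega)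
            have hInnerNe : Dz m (m+t+2) ≠ 0 := by rw [hInner]; exact Fq_ne m (t+1)
            have hdj := DJz m (m+t+2) hInnerNe
            have h0 : Dz (m+2) (m+t+3) = Fq (m+2) t := iht _ (by omega)
            have hs2 : Dz m (m+t+3) = Fq m (t+2) := ih m (by omega) (t+2) _ (by omega)
            have hs1 : Dz (m+1) (m+t+3) = Fq (m+1) (t+1) := ih (m+1) (by omega) (t+1) _ (by omega)
            rw [hInner, h0, hs2, hs1] at hdj
            have hfq := FqDJ m t
            have : Dz (m+2) (m+t+2+2) * Fq m (t+1) = Fq (m+2) (t+1) * Fq m (t+1) := by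
              rw [hdj, hfq]
            exact mul_right_cancel₀ (Fq_ne m (t+1)) this

theorem stmt3 (m : ℕ) (hm : 1 ≤ m) :
    (∀ n : ℕ, m + 1 ≤ n →
      Matrix.det (Matrix.of fun i j : Fin n =>
          centralBinomZ (((i : ℕ) : ℤ) + ((j : ℕ) : ℤ) - (m : ℤ))) =
        (-1 : ℚ) ^ ((m + 1).choose 2) * 2 ^ (n - m - 1) *
          pRat (m + 1) ((n : ℚ) - (m : ℚ) - 1)) ∧
    (∀ n : ℕ, 1 ≤ n → n ≤ m →
      Matrix.det (Matrix.of fun i j : Fin n =>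
          centralBinomZ (((i : ℕ) : ℤ) + ((j : ℕ) : ℤ) - (m : ℤ))) = 0) := by
  constructor
  · intro n hn
    obtain ⟨t, rfl⟩ : ∃ t, n = m+1+t := ⟨n-m-1, by omega⟩
    have h := master m t (m+1+t) rfl
    rw [show m+1+t-m-1 = t by omega]
    rw [show ((m+1+t : ℕ):ℚ) - (m:ℚ) - 1 = (t:ℚ) by push_cast; ring]
    exact h
  · intro n h1 h2
    exact part2 m n h1 h2
end

section
/- Fix t ∈ ℚ. For every integer m ≥ 1 and every natural number n ≥ m+1, the backward-shifted Hankel determinant of Narayana polynomials of type B satisfies det(B_{i+j−m}(t))_{i,j=0}^{n−1} = (−1)^{binom(m+1,2)} · (2t)^{n−m−1} · det(C_{i+j+m+1}(t))_{i,j=0}^{n−m−2}; moreover det(B_{i+j−m}(t))_{i,j=0}^{n−1} = 0 for all n with 1 ≤ n ≤ m. -/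
open Finset

/-- Narayana polynomials of type B, `B_n(t) = ∑_{k=0}^n C(n,k)^2 t^k`,
extended to `ℤ` by `0` for negative indices. -/
def narayanaB (t : ℚ) (n : ℤ) : ℚ :=
  if 0 ≤ n then ∑ k ∈ Finset.range (n.toNat + 1), (n.toNat.choose k : ℚ) ^ 2 * t ^ k else 0

/-- Narayana polynomials `C_n(t)`, extended to `ℤ` by `0` for negative indices:
`C_0(t) = 1` and `C_n(t) = ∑_{k=0}^{n-1} (1/(k+1)) C(n-1,k) C(n,k) t^k` for `n ≥ 1`. -/
def narayana (t : ℚ) (n : ℤ) : ℚ :=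
  if n < 0 then 0
  else if n = 0 then 1
  else ∑ k ∈ Finset.range n.toNat,
    (1 / ((k : ℚ) + 1)) * ((n.toNat - 1).choose k : ℚ) * (n.toNat.choose k : ℚ) * t ^ k

/- ### auxiliary sequences -/

private def gg (t : ℚ) (r m : ℕ) : ℚ :=
  ∑ k ∈ Finset.range (m + 1), (m.choose k : ℚ) * (m.choose (k + r) : ℚ) * t ^ k

private def CN (t : ℚ) (s : ℕ) : ℚ :=
  if s = 0 then 1
  else ∑ k ∈ Finset.range s,
    (1 / ((k : ℚ) + 1)) * ((s - 1).choose k : ℚ) * (s.choose k : ℚ) * t ^ k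

private def bb (t : ℚ) : ℕ → ℚ
  | 0 => 1
  | 1 => -(1 + t)
  | (s + 2) => -(2 * t) * CN t (s + 1)

private def VV (t : ℚ) : ℕ → ℕ → ℚ
  | r, 0 => if r = 0 then 1 else 0
  | 0, _ + 1 => 0
  | (r + 1), (s + 1) => (1 + t) * VV t (r + 1) s + VV t r s + t * VV t (r + 2) s
termination_by r s => s

/- ### pointwise binomial identities -/

private lemma I0 (M j : ℕ) :
    ((M : ℚ) - j) * (M.choose j : ℚ) = ((j : ℚ) + 1) * (M.choose (j + 1) : ℚ) := by
  rcases le_or_gt (j + 1) M with h | h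
  · have h0 := Nat.choose_succ_right_eq M j
    have hc : (M.choose (j+1) : ℚ) * ((j : ℚ) + 1) = (M.choose j : ℚ) * ((M : ℚ) - (j : ℚ)) := by
      rw [show ((M : ℚ) - (j : ℚ)) = ((M - j : ℕ) : ℚ) by
        rw [Nat.cast_sub (by omega : j ≤ M)]]
      exact_mod_cast h0
    linarith [hc]
  · rcases le_or_gt j M with h2 | h2
    · have hjM : j = M := by omega
      subst hjM
      simp [Nat.choose_succ_self]
    · rw [Nat.choose_eq_zero_of_lt h2, Nat.choose_eq_zero_of_lt (by omega)]
      ring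

private lemma alg1 (Mq k r x x' y y' : ℚ)
    (h1 : (Mq - k) * x = (k + 1) * x')
    (h2 : (Mq - (k + 1 + r)) * y = (k + 1 + r + 1) * y')
    (hk : (k : ℚ) + 1 ≠ 0) (hkr : k + r + 2 ≠ 0) :
    (Mq - r) * x' * y
      = (r + 1) * x' * y' + (r + 1) * x * y + (Mq + r + 2) * x * y' := by
  have key : (k + 1) * ((k + r + 2) * ((Mq - r) * x' * y))
      = (k + 1) * ((k + r + 2) *
        ((r + 1) * x' * y' + (r + 1) * x * y + (Mq + r + 2) * x * y')) := by
    linear_combination (-(k + r + 2) * (Mq - r) * y + (r + 1) * (Mq - k - r - 1) * y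
        - (r + 1) * ((Mq - k - r - 1) * y - (k + r + 2) * y')) * h1
      + (((r + 1) * (Mq - k) + (k + 1) * (Mq + 2 + r)) * x) * h2
  exact mul_left_cancel₀ hkr (mul_left_cancel₀ hk key)


private lemma I1 (M k r : ℕ) :
    ((M : ℚ) - r) * (M.choose (k+1) : ℚ) * (M.choose (k+1+r) : ℚ)
      = ((r : ℚ) + 1) * (M.choose (k+1) : ℚ) * (M.choose (k+1+r+1) : ℚ)
        + ((r : ℚ) + 1) * (M.choose k : ℚ) * (M.choose (k+1+r) : ℚ)
        + ((M : ℚ) + r + 2) * (M.choose k : ℚ) * (M.choose (k+1+r+1) : ℚ) := by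
  have h1 := I0 M k
  have h2 := I0 M (k+1+r)
  push_cast at h2
  have hk : (k : ℚ) + 1 ≠ 0 := by positivity
  have hkr : (k : ℚ) + r + 2 ≠ 0 := by positivity
  have H := alg1 (M : ℚ) k r (M.choose k : ℚ) (M.choose (k+1) : ℚ)
    (M.choose (k+1+r) : ℚ) (M.choose (k+1+r+1) : ℚ) h1 (by linear_combination h2) hk hkr
  linear_combination H

private lemma L3 (t : ℚ) (M r : ℕ) :
    ((M : ℚ) - r) * gg t r M
      = ((r : ℚ) + 1) * (1 + t) * gg t (r+1) M + t * ((M : ℚ) + r + 2) * gg t (r+2) M := by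
  have key : (∑ k ∈ Finset.range (M+1),
        (((M:ℚ) - r) * (M.choose k : ℚ) * (M.choose (k+r) : ℚ) * t^k
          - ((r:ℚ)+1) * (M.choose k : ℚ) * (M.choose (k+(r+1)) : ℚ) * t^k))
      = ∑ k ∈ Finset.range (M+1),
        ((((r:ℚ)+1) * (M.choose k : ℚ) * (M.choose (k+(r+1)) : ℚ)
          + ((M:ℚ)+r+2) * (M.choose k : ℚ) * (M.choose (k+(r+2)) : ℚ)) * t^(k+1)) := by
    rw [Finset.sum_range_succ' (fun k =>
      (((M:ℚ) - r) * (M.choose k : ℚ) * (M.choose (k+r) : ℚ) * t^k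
        - ((r:ℚ)+1) * (M.choose k : ℚ) * (M.choose (k+(r+1)) : ℚ) * t^k)) M]
    have hF0 : (((M:ℚ) - r) * (M.choose 0 : ℚ) * (M.choose (0+r) : ℚ) * t^0
        - ((r:ℚ)+1) * (M.choose 0 : ℚ) * (M.choose (0+(r+1)) : ℚ) * t^0) = 0 := by
      have h := I0 M r
      simp only [Nat.zero_add, Nat.choose_zero_right, Nat.cast_one, pow_zero]
      linear_combination h
    rw [hF0, add_zero]
    have hext : (∑ k ∈ Finset.range M,
          (((M:ℚ) - r) * (M.choose (k+1) : ℚ) * (M.choose (k+1+r) : ℚ) * t^(k+1)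
            - ((r:ℚ)+1) * (M.choose (k+1) : ℚ) * (M.choose (k+1+(r+1)) : ℚ) * t^(k+1)))
        = ∑ k ∈ Finset.range (M+1),
          (((M:ℚ) - r) * (M.choose (k+1) : ℚ) * (M.choose (k+1+r) : ℚ) * t^(k+1)
            - ((r:ℚ)+1) * (M.choose (k+1) : ℚ) * (M.choose (k+1+(r+1)) : ℚ) * t^(k+1)) := by
      rw [Finset.sum_range_succ]
      simp [Nat.choose_succ_self]
    rw [hext]
    refine Finset.sum_congr rfl fun k hk => ?_
    have h := I1 M k r
    have e1 : k+1+(r+1) = k+1+r+1 := by omega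
    have e2 : k+(r+1) = k+1+r := by omega
    have e3 : k+(r+2) = k+1+r+1 := by omega
    rw [e1, e2, e3]
    linear_combination t^(k+1) * h
  have hL : ((M : ℚ) - r) * gg t r M
      = (∑ k ∈ Finset.range (M+1),
          (((M:ℚ) - r) * (M.choose k : ℚ) * (M.choose (k+r) : ℚ) * t^k
            - ((r:ℚ)+1) * (M.choose k : ℚ) * (M.choose (k+(r+1)) : ℚ) * t^k))
        + ∑ k ∈ Finset.range (M+1),
            ((r:ℚ)+1) * (M.choose k : ℚ) * (M.choose (k+(r+1)) : ℚ) * t^k := by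
    simp only [gg, Finset.mul_sum, ← Finset.sum_add_distrib]
    exact Finset.sum_congr rfl fun k _ => by ring
  have hsplit : ((r : ℚ) + 1) * (1 + t) * gg t (r+1) M + t * ((M : ℚ) + r + 2) * gg t (r+2) M
      = (∑ k ∈ Finset.range (M+1),
          ((r:ℚ)+1) * (M.choose k : ℚ) * (M.choose (k+(r+1)) : ℚ) * t^k)
        + ∑ k ∈ Finset.range (M+1),
          ((((r:ℚ)+1) * (M.choose k : ℚ) * (M.choose (k+(r+1)) : ℚ)
            + ((M:ℚ)+r+2) * (M.choose k : ℚ) * (M.choose (k+(r+2)) : ℚ)) * t^(k+1)) := by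
    simp only [gg, Finset.mul_sum, ← Finset.sum_add_distrib]
    exact Finset.sum_congr rfl fun k _ => by ring
  rw [hL, hsplit, key]
  ring


private lemma pascalQ (m a : ℕ) :
    ((m+1).choose (a+1) : ℚ) = (m.choose a : ℚ) + (m.choose (a+1) : ℚ) := by
  exact_mod_cast Nat.choose_succ_succ m a

private lemma I2succ (t : ℚ) (r m : ℕ) :
    gg t (r+1) (m+1) = (1+t) * gg t (r+1) m + gg t r m + t * gg t (r+2) m := by
  have expand : gg t (r+1) (m+1)
      = ((∑ k ∈ Finset.range (m+1),
            (m.choose (k+1) : ℚ) * ((m+1).choose (k+1+(r+1)) : ℚ) * t^(k+1))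
          + (∑ k ∈ Finset.range (m+1),
            (m.choose k : ℚ) * ((m+1).choose (k+1+(r+1)) : ℚ) * t^(k+1)))
        + ((m+1).choose (r+1) : ℚ) := by
    rw [gg, Finset.sum_range_succ' (fun k =>
      ((m+1).choose k : ℚ) * ((m+1).choose (k+(r+1)) : ℚ) * t^k) (m+1)]
    congr 1
    · rw [← Finset.sum_add_distrib]
      refine Finset.sum_congr rfl fun k hk => ?_
      rw [pascalQ m k]
      ring
    · simp [Nat.zero_add]
  have key1 : (∑ k ∈ Finset.range (m+1),
        (m.choose k : ℚ) * ((m+1).choose (k+(r+1)) : ℚ) * t^k)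
      = ((m+1).choose (r+1) : ℚ) + ∑ k ∈ Finset.range (m+1),
          (m.choose (k+1) : ℚ) * ((m+1).choose (k+1+(r+1)) : ℚ) * t^(k+1) := by
    rw [Finset.sum_range_succ' (fun k =>
        (m.choose k : ℚ) * ((m+1).choose (k+(r+1)) : ℚ) * t^k) m,
      Finset.sum_range_succ (fun k =>
        (m.choose (k+1) : ℚ) * ((m+1).choose (k+1+(r+1)) : ℚ) * t^(k+1)) m]
    simp [Nat.choose_succ_self, Nat.zero_add]
    ring
  have rhsexp : (1+t) * gg t (r+1) m + gg t r m + t * gg t (r+2) m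
      = (∑ k ∈ Finset.range (m+1),
          (m.choose k : ℚ) * ((m+1).choose (k+(r+1)) : ℚ) * t^k)
        + ∑ k ∈ Finset.range (m+1),
          (m.choose k : ℚ) * ((m+1).choose (k+1+(r+1)) : ℚ) * t^(k+1) := by
    simp only [gg, Finset.mul_sum, ← Finset.sum_add_distrib]
    refine Finset.sum_congr rfl fun k hk => ?_
    have hA : ((m+1).choose (k+(r+1)) : ℚ)
        = (m.choose (k+r) : ℚ) + (m.choose (k+(r+1)) : ℚ) := by
      have e : k+(r+1) = (k+r)+1 := by omega
      rw [e, pascalQ]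
    have hB : ((m+1).choose (k+1+(r+1)) : ℚ)
        = (m.choose (k+(r+1)) : ℚ) + (m.choose (k+(r+2)) : ℚ) := by
      have e : k+1+(r+1) = (k+(r+1))+1 := by omega
      have e' : k+(r+2) = (k+(r+1))+1 := by omega
      rw [e, e', pascalQ]
    rw [hA, hB]
    ring
  rw [expand, rhsexp, key1]
  ring

private lemma I2zero (t : ℚ) (m : ℕ) :
    gg t 0 (m+1) = (1+t) * gg t 0 m + 2 * t * gg t 1 m := by
  have expand : gg t 0 (m+1)
      = (∑ k ∈ Finset.range (m+1),
          (((m.choose k : ℚ) + (m.choose (k+1) : ℚ))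
            * ((m.choose k : ℚ) + (m.choose (k+1) : ℚ)) * t^(k+1)))
        + 1 := by
    rw [gg, Finset.sum_range_succ' (fun k =>
      ((m+1).choose k : ℚ) * ((m+1).choose (k+0) : ℚ) * t^k) (m+1)]
    congr 1
    · refine Finset.sum_congr rfl fun k hk => ?_
      have e : k+1+0 = k+1 := by omega
      rw [e, pascalQ m k]
    · simp
  have key1 : (∑ k ∈ Finset.range (m+1), (m.choose k : ℚ) * (m.choose k : ℚ) * t^k)
      = 1 + ∑ k ∈ Finset.range (m+1),
          (m.choose (k+1) : ℚ) * (m.choose (k+1) : ℚ) * t^(k+1) := by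
    rw [Finset.sum_range_succ' (fun k =>
        (m.choose k : ℚ) * (m.choose k : ℚ) * t^k) m,
      Finset.sum_range_succ (fun k =>
        (m.choose (k+1) : ℚ) * (m.choose (k+1) : ℚ) * t^(k+1)) m]
    simp [Nat.choose_succ_self]
    ring
  have rhsexp : (1+t) * gg t 0 m + 2 * t * gg t 1 m
      = (∑ k ∈ Finset.range (m+1), (m.choose k : ℚ) * (m.choose k : ℚ) * t^k)
        + ∑ k ∈ Finset.range (m+1),
          (((m.choose k : ℚ) * (m.choose k : ℚ)
            + 2 * (m.choose k : ℚ) * (m.choose (k+1) : ℚ)) * t^(k+1)) := by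
    simp only [gg, Nat.add_zero, Finset.mul_sum, ← Finset.sum_add_distrib]
    refine Finset.sum_congr rfl fun k hk => ?_
    ring
  rw [expand, rhsexp, key1]
  have combined : (∑ k ∈ Finset.range (m+1),
        (m.choose (k+1) : ℚ) * (m.choose (k+1) : ℚ) * t^(k+1))
      + (∑ k ∈ Finset.range (m+1),
          (((m.choose k : ℚ) * (m.choose k : ℚ)
            + 2 * (m.choose k : ℚ) * (m.choose (k+1) : ℚ)) * t^(k+1)))
      = ∑ k ∈ Finset.range (m+1),
          (((m.choose k : ℚ) + (m.choose (k+1) : ℚ))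
            * ((m.choose k : ℚ) + (m.choose (k+1) : ℚ)) * t^(k+1)) := by
    rw [← Finset.sum_add_distrib]
    refine Finset.sum_congr rfl fun k hk => ?_
    ring
  linear_combination -combined

private lemma gg_zero (t : ℚ) (r : ℕ) : gg t r 0 = if r = 0 then 1 else 0 := by
  rw [gg]
  rcases r with _ | r <;> simp

private lemma gg_one_succ (t : ℚ) (r : ℕ) : gg t (r+1) 1 = if r = 0 then 1 else 0 := by
  rw [gg]
  rcases r with _ | r
  · simp [Finset.sum_range_succ]
  · have h1 : Nat.choose 1 (r+1+1) = 0 := Nat.choose_eq_zero_of_lt (by omega)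
    have h2 : Nat.choose 1 (1+(r+1+1)) = 0 := Nat.choose_eq_zero_of_lt (by omega)
    simp [Finset.sum_range_succ, h1, h2]


private lemma VV_base (t : ℚ) (r : ℕ) : VV t r 0 = if r = 0 then 1 else 0 := by
  rw [VV]

private lemma VV_zr (t : ℚ) (s : ℕ) : VV t 0 (s+1) = 0 := by
  rw [VV]

private lemma VV_succ (t : ℚ) (r s : ℕ) :
    VV t (r+1) (s+1) = (1+t) * VV t (r+1) s + VV t r s + t * VV t (r+2) s := by
  rw [VV]

private lemma I3 (t : ℚ) : ∀ s r : ℕ, (s : ℚ) * VV t r s = (r : ℚ) * gg t r s := by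
  intro s
  induction s with
  | zero =>
    intro r
    rcases r with _ | r <;> simp [VV_base, gg_zero]
  | succ s IH =>
    intro r
    rcases r with _ | ρ
    · simp [VV_zr]
    · rcases s with _ | s'
      · rw [VV_succ]
        rcases ρ with _ | ρ' <;> simp [VV_base, VV_zr, gg_one_succ]
      · have hs : ((s' : ℚ) + 1) ≠ 0 := by positivity
        rw [VV_succ]
        have ih1 := IH (ρ+1)
        have ih0 := IH ρ
        have ih2 := IH (ρ+2)
        have hI2 := I2succ t ρ (s'+1)
        have hL3 := L3 t (s'+1) ρ
        push_cast at ih1 ih0 ih2 hL3 ⊢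
        apply mul_left_cancel₀ hs
        linear_combination (((s' : ℚ)+1)+1) * (1+t) * ih1 + (((s' : ℚ)+1)+1) * ih0
          + (((s' : ℚ)+1)+1) * t * ih2 - (((s' : ℚ)+1) * ((ρ : ℚ)+1)) * hI2 - hL3

private lemma I4 (t : ℚ) (s : ℕ) : ((s : ℚ) + 1) * CN t (s+1) = gg t 1 (s+1) := by
  rw [CN, if_neg (Nat.succ_ne_zero s), gg,
    Finset.sum_range_succ (fun k => ((s+1).choose k : ℚ) * ((s+1).choose (k+1) : ℚ) * t^k) (s+1)]
  rw [Nat.choose_succ_self]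
  push_cast
  rw [mul_comm, Finset.sum_mul]
  simp only [add_zero, mul_zero, zero_mul]
  refine Finset.sum_congr rfl fun k hk => ?_
  have hk1 : ((k : ℚ) + 1) ≠ 0 := by positivity
  have hc : ((s : ℚ) + 1) * (s.choose k : ℚ) = ((s+1).choose (k+1) : ℚ) * ((k : ℚ) + 1) := by
    exact_mod_cast Nat.add_one_mul_choose_eq s k
  field_simp
  linear_combination (((s+1).choose k : ℚ) * t^k) * hc

private lemma VV_one (t : ℚ) (s : ℕ) : VV t 1 (s+1) = CN t (s+1) := by
  have h3 := I3 t (s+1) 1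
  have h4 := I4 t s
  have hs : ((s : ℚ) + 1) ≠ 0 := by positivity
  apply mul_left_cancel₀ hs
  push_cast at h3
  rw [h4]
  linear_combination h3

private lemma I5 (t : ℚ) : ∀ m r : ℕ,
    gg t r m = ∑ j ∈ Finset.range (m+1), VV t r (m-j) * gg t 0 j := by
  intro m
  induction m with
  | zero =>
    intro r
    rcases r with _ | r <;> simp [VV_base, gg_zero]
  | succ m IH =>
    intro r
    rw [Finset.sum_range_succ]
    rcases r with _ | ρ
    · have hz : ∀ j ∈ Finset.range (m+1), VV t 0 (m+1-j) * gg t 0 j = 0 := by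
        intro j hj
        have e : m+1-j = (m-j)+1 := by
          have := Finset.mem_range.mp hj; omega
        rw [e, VV_zr, zero_mul]
      rw [Finset.sum_congr rfl hz]
      simp [VV_base, Nat.sub_self]
    · have hsplit : ∑ j ∈ Finset.range (m+1), VV t (ρ+1) (m+1-j) * gg t 0 j
          = (1+t) * (∑ j ∈ Finset.range (m+1), VV t (ρ+1) (m-j) * gg t 0 j)
            + (∑ j ∈ Finset.range (m+1), VV t ρ (m-j) * gg t 0 j)
            + t * (∑ j ∈ Finset.range (m+1), VV t (ρ+2) (m-j) * gg t 0 j) := by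
        simp only [Finset.mul_sum, ← Finset.sum_add_distrib]
        refine Finset.sum_congr rfl fun j hj => ?_
        have e : m+1-j = (m-j)+1 := by
          have := Finset.mem_range.mp hj; omega
        rw [e, VV_succ]; ring
      rw [hsplit, ← IH (ρ+1), ← IH ρ, ← IH (ρ+2), Nat.sub_self, VV_base]
      rw [I2succ]
      simp

private lemma I6 (t : ℚ) (N : ℕ) :
    (∑ u ∈ Finset.range (N+1), gg t 0 u * bb t (N-u)) = if N = 0 then 1 else 0 := by
  rcases N with _ | _ | M
  · simp [bb, gg_zero]
  · rw [Finset.sum_range_succ, Finset.sum_range_one]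
    have e1 : (1:ℕ) - 0 = 1 := rfl
    have e2 : (1:ℕ) - 1 = 0 := rfl
    rw [e1, e2]
    have hA1 : gg t 0 1 = 1 + t := by
      rw [gg]; simp [Finset.sum_range_succ]
    rw [hA1, gg_zero]
    simp [bb]
  · rw [Finset.sum_range_succ, Finset.sum_range_succ]
    have e1 : M + 2 - (M+1) = 1 := by omega
    have e2 : M + 2 - (M+2) = 0 := by omega
    rw [e1, e2]
    have hbody : ∀ u ∈ Finset.range (M+1), gg t 0 u * bb t (M+2-u)
        = gg t 0 u * (-(2*t) * CN t (M+1-u)) := by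
      intro u hu
      have hu' := Finset.mem_range.mp hu
      have e : M+2-u = (M-u)+2 := by omega
      have e' : M+1-u = (M-u)+1 := by omega
      rw [e, e']
      rfl
    rw [Finset.sum_congr rfl hbody]
    have hG : gg t 1 (M+1) = ∑ j ∈ Finset.range (M+1), CN t (M+1-j) * gg t 0 j := by
      rw [I5 t (M+1) 1, Finset.sum_range_succ, Nat.sub_self, VV_base]
      simp only [if_neg (Nat.one_ne_zero), zero_mul, add_zero]
      refine Finset.sum_congr rfl fun j hj => ?_
      have e : M+1-j = (M-j)+1 := by
        have := Finset.mem_range.mp hj; omega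
      rw [e, VV_one]
    have hI2 := I2zero t (M+1)
    have hsum : ∑ u ∈ Finset.range (M+1), gg t 0 u * (-(2*t) * CN t (M+1-u))
        = -(2*t) * ∑ j ∈ Finset.range (M+1), CN t (M+1-j) * gg t 0 j := by
      rw [Finset.mul_sum]
      exact Finset.sum_congr rfl fun j hj => by ring
    rw [hsum, ← hG]
    simp only [bb, if_neg (by omega : M + 2 ≠ 0)]
    linear_combination hI2


private lemma nar_cast (t : ℚ) (s : ℕ) : narayana t (s : ℤ) = CN t s := by
  rcases s with _ | s
  · simp [narayana, CN]
  · rw [narayana, CN]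
    rw [if_neg (by omega), if_neg (by omega), if_neg (Nat.succ_ne_zero s)]
    simp

private lemma narB_cast (t : ℚ) (u : ℕ) : narayanaB t (u : ℤ) = gg t 0 u := by
  rw [narayanaB, if_pos (by omega : (0:ℤ) ≤ (u:ℤ)), gg]
  simp only [Int.toNat_natCast]
  refine Finset.sum_congr rfl fun k hk => ?_
  rw [Nat.add_zero]
  ring

private lemma narB_neg (t : ℚ) {z : ℤ} (h : z < 0) : narayanaB t z = 0 :=
  if_neg (by omega)

private lemma Srow (t : ℚ) (m i k : ℕ) (hi : i ≤ m) :
    (∑ j ∈ Finset.range (k+1),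
        narayanaB t ((i:ℤ) + (j:ℤ) - (m:ℤ)) * bb t (k - j))
      = if i + k = m then 1 else 0 := by
  rcases lt_or_ge k (m - i) with hk | hk
  · rw [Finset.sum_congr rfl (fun j hj => ?_), Finset.sum_const_zero,
      if_neg (by omega)]
    have hj' := Finset.mem_range.mp hj
    rw [narB_neg t (by omega), zero_mul]
  · have e : k + 1 = (m - i) + (k + 1 - (m - i)) := by omega
    rw [e, Finset.sum_range_add]
    have h1 : ∀ j ∈ Finset.range (m - i),
        narayanaB t ((i:ℤ) + (j:ℤ) - (m:ℤ)) * bb t (k - j) = 0 := by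
      intro j hj
      have hj' := Finset.mem_range.mp hj
      rw [narB_neg t (by omega), zero_mul]
    rw [Finset.sum_congr rfl h1, Finset.sum_const_zero, zero_add]
    have h2 : ∀ j ∈ Finset.range (k + 1 - (m - i)),
        narayanaB t ((i:ℤ) + ((m - i + j : ℕ):ℤ) - (m:ℤ)) * bb t (k - (m - i + j))
          = gg t 0 j * bb t ((k - (m - i)) - j) := by
      intro j hj
      have e1 : (i:ℤ) + ((m - i + j : ℕ):ℤ) - (m:ℤ) = (j : ℤ) := by
        push_cast [Nat.cast_sub hi]
        ring
      have e2 : k - (m - i + j) = (k - (m - i)) - j := by omega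
      rw [e1, e2, narB_cast]
    rw [Finset.sum_congr rfl h2]
    have e3 : k + 1 - (m - i) = (k - (m - i)) + 1 := by omega
    rw [e3, I6]
    have : k - (m - i) = 0 ↔ i + k = m := by omega
    split_ifs with h4 h5 h5
    · rfl
    · exact absurd (this.mp h4) h5
    · exact absurd (this.mpr h5) h4
    · rfl

private lemma Sblock (t : ℚ) (m i' k' : ℕ) :
    (∑ j ∈ Finset.range ((m+1+k')+1),
        narayanaB t (((m+1+i' : ℕ):ℤ) + (j:ℤ) - (m:ℤ)) * bb t ((m+1+k') - j))
      = ∑ v ∈ Finset.range (i'+1), gg t 0 (i'-v) * (2*t*CN t (v+k'+m+1)) := by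
  set k := m+1+k' with hk
  have hfull := I6 t (k + i' + 1)
  rw [if_neg (by omega)] at hfull
  have e : (k + i' + 1) + 1 = (i'+1) + (k+1) := by omega
  rw [e, Finset.sum_range_add] at hfull
  have h2 : ∀ j ∈ Finset.range (k+1),
      gg t 0 (i' + 1 + j) * bb t ((k + i' + 1) - (i' + 1 + j))
        = narayanaB t (((m+1+i' : ℕ):ℤ) + (j:ℤ) - (m:ℤ)) * bb t (k - j) := by
    intro j hj
    have e1 : (((m+1+i' : ℕ):ℤ) + (j:ℤ) - (m:ℤ)) = ((i' + 1 + j : ℕ) : ℤ) := by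
      push_cast; ring
    have e2 : (k + i' + 1) - (i' + 1 + j) = k - j := by omega
    rw [e1, e2, narB_cast]
  rw [Finset.sum_congr rfl h2] at hfull
  -- hfull : Σ_{w∈range(i'+1)} gg t 0 w * bb t (k+i'+1-w) + S = 0
  have h3 : ∀ w ∈ Finset.range (i'+1),
      gg t 0 w * bb t ((k + i' + 1) - w)
        = -(gg t 0 w * (2*t*CN t ((i' - w) + k' + m + 1))) := by
    intro w hw
    have hw' := Finset.mem_range.mp hw
    have e4 : (k + i' + 1) - w = ((i' - w) + k' + m) + 2 := by omega
    rw [e4]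
    show gg t 0 w * (-(2*t) * CN t ((i' - w) + k' + m + 1)) = _
    ring
  rw [Finset.sum_congr rfl h3, Finset.sum_neg_distrib] at hfull
  have h5 : ∑ v ∈ Finset.range (i'+1), gg t 0 (i'-v) * (2*t*CN t (v+k'+m+1))
      = ∑ w ∈ Finset.range (i'+1), gg t 0 w * (2*t*CN t ((i' - w) + k' + m + 1)) := by
    rw [← Finset.sum_range_reflect (fun v => gg t 0 (i'-v) * (2*t*CN t (v+k'+m+1))) (i'+1)]
    refine Finset.sum_congr rfl fun w hw => ?_
    have hw' := Finset.mem_range.mp hw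
    have e5 : i' + 1 - 1 - w = i' - w := by omega
    have e6 : i' - (i' - w) = w := by omega
    rw [e5, e6]
  rw [h5]
  linarith [hfull]


private lemma det_J : ∀ s : ℕ,
    (Matrix.of fun i k : Fin s => if (i:ℕ)+(k:ℕ)+1 = s then (1:ℚ) else 0).det
      = (-1 : ℚ)^(s.choose 2)
  | 0 => by simp [Matrix.det_fin_zero]
  | (s+1) => by
    rw [Matrix.det_succ_row_zero]
    rw [Finset.sum_eq_single (Fin.last s)]
    · have hminor : ((Matrix.of fun i k : Fin (s+1) =>
          if (i:ℕ)+(k:ℕ)+1 = s+1 then (1:ℚ) else 0).submatrix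
            Fin.succ (Fin.last s).succAbove)
          = (Matrix.of fun i k : Fin s => if (i:ℕ)+(k:ℕ)+1 = s then (1:ℚ) else 0) := by
        ext i k
        rw [Fin.succAbove_last]
        simp only [Matrix.submatrix_apply, Matrix.of_apply, Fin.val_succ,
          Fin.coe_castSucc]
        exact if_congr (by omega) rfl rfl
      rw [hminor, det_J s]
      simp only [Fin.val_last, Matrix.of_apply]
      rw [if_pos (by simp only [Fin.val_zero]; omega)]
      have h2 : (s+1).choose 2 = s.choose 2 + s := by
        rw [Nat.choose_succ_succ]
        simp [Nat.choose_one_right, Nat.add_comm]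
      rw [h2, pow_add]
      ring
    · intro b _ hb
      have hb' : (b:ℕ) ≠ s := fun h => hb (Fin.ext h)
      simp only [Matrix.of_apply]
      rw [if_neg (by simp only [Fin.val_zero]; omega)]
      ring
    · intro h
      exact absurd (Finset.mem_univ _) h


private lemma main_pos (t : ℚ) (m n : ℕ) (hn : m + 1 ≤ n) :
    Matrix.det (Matrix.of fun i j : Fin n =>
        narayanaB t (((i : ℕ) : ℤ) + ((j : ℕ) : ℤ) - (m : ℤ))) =
      (-1 : ℚ) ^ ((m + 1).choose 2) * (2 * t) ^ (n - m - 1) *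
        Matrix.det (Matrix.of fun i j : Fin (n - m - 1) =>
          narayana t (((i : ℕ) : ℤ) + ((j : ℕ) : ℤ) + (m : ℤ) + 1)) := by
  set q := n - m - 1 with hqdef
  have hq : (m + 1) + q = n := by omega
  set A : Matrix (Fin n) (Fin n) ℚ := Matrix.of fun i j : Fin n =>
    narayanaB t (((i : ℕ) : ℤ) + ((j : ℕ) : ℤ) - (m : ℤ)) with hA
  set T : Matrix (Fin n) (Fin n) ℚ := Matrix.of fun j k : Fin n =>
    if (j:ℕ) ≤ (k:ℕ) then bb t ((k:ℕ) - (j:ℕ)) else 0 with hT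
  have hTtri : T.BlockTriangular id := by
    intro i j hij
    have : (j:ℕ) < (i:ℕ) := hij
    simp only [hT, Matrix.of_apply]
    rw [if_neg (by omega)]
  have hTdet : T.det = 1 := by
    rw [Matrix.det_of_upperTriangular hTtri]
    have : ∀ i : Fin n, T i i = 1 := by
      intro i
      simp only [hT, Matrix.of_apply, le_refl, if_true, Nat.sub_self]
      rfl
    simp [this]
  have hMT : ∀ i k : Fin n, (A * T) i k
      = ∑ j ∈ Finset.range ((k:ℕ)+1),
          narayanaB t (((i:ℕ):ℤ) + ((j:ℕ):ℤ) - (m:ℤ)) * bb t ((k:ℕ) - j) := by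
    intro i k
    rw [Matrix.mul_apply]
    have h1 : (∑ j : Fin n, A i j * T j k)
        = ∑ j ∈ Finset.range n,
            narayanaB t (((i:ℕ):ℤ) + ((j:ℕ):ℤ) - (m:ℤ))
              * (if j ≤ (k:ℕ) then bb t ((k:ℕ) - j) else 0) := by
      rw [← Fin.sum_univ_eq_sum_range (fun jj =>
        narayanaB t (((i:ℕ):ℤ) + ((jj:ℕ):ℤ) - (m:ℤ))
          * (if jj ≤ (k:ℕ) then bb t ((k:ℕ) - jj) else 0)) n]
      rfl
    rw [h1]
    rw [← Finset.sum_subset (Finset.range_subset_range.mpr (show (k:ℕ)+1 ≤ n from k.isLt))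
      (fun x _ hx => by
        rw [if_neg (fun h => hx (Finset.mem_range.mpr (by omega))), mul_zero])]
    exact Finset.sum_congr rfl fun j hj => by
      rw [if_pos (Nat.lt_succ_iff.mp (Finset.mem_range.mp hj))]
  have heL : ∀ i : Fin (m+1),
      (((finSumFinEquiv.trans (finCongr hq)) (Sum.inl i) : Fin n) : ℕ) = (i:ℕ) := by
    intro i; simp
  have heR : ∀ j : Fin q,
      (((finSumFinEquiv.trans (finCongr hq)) (Sum.inr j) : Fin n) : ℕ) = m+1+(j:ℕ) := by
    intro j; simp
  have hsub : (A*T).submatrix (finSumFinEquiv.trans (finCongr hq))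
        (finSumFinEquiv.trans (finCongr hq))
      = Matrix.fromBlocks
          (Matrix.of fun i k : Fin (m+1) => if (i:ℕ)+(k:ℕ)+1 = m+1 then (1:ℚ) else 0)
          0
          (Matrix.of fun i k => (A*T) ((finSumFinEquiv.trans (finCongr hq)) (Sum.inr i))
            ((finSumFinEquiv.trans (finCongr hq)) (Sum.inl k)))
          (Matrix.of fun i' k' : Fin q => ∑ v ∈ Finset.range ((i':ℕ)+1),
            gg t 0 ((i':ℕ)-v) * (2*t*CN t (v+(k':ℕ)+m+1))) := by
    ext ik jk
    rcases ik with i | i <;> rcases jk with k | k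
    · simp only [Matrix.submatrix_apply, Matrix.fromBlocks_apply₁₁, Matrix.of_apply]
      rw [hMT, heL, heL, Srow t m (i:ℕ) (k:ℕ) (by omega)]
      exact if_congr (by omega) rfl rfl
    · simp only [Matrix.submatrix_apply, Matrix.fromBlocks_apply₁₂, Matrix.zero_apply]
      rw [hMT, heL, heR, Srow t m (i:ℕ) (m+1+(k:ℕ)) (by omega)]
      rw [if_neg (by omega)]
    · simp only [Matrix.submatrix_apply, Matrix.fromBlocks_apply₂₁, Matrix.of_apply]
    · simp only [Matrix.submatrix_apply, Matrix.fromBlocks_apply₂₂, Matrix.of_apply]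
      rw [hMT, heR, heR]
      exact Sblock t m (i:ℕ) (k:ℕ)
  have hD : (Matrix.of fun i' k' : Fin q => ∑ v ∈ Finset.range ((i':ℕ)+1),
        gg t 0 ((i':ℕ)-v) * (2*t*CN t (v+(k':ℕ)+m+1)))
      = (Matrix.of fun i v : Fin q =>
          if (v:ℕ) ≤ (i:ℕ) then gg t 0 ((i:ℕ)-(v:ℕ)) else 0)
        * ((2*t) • Matrix.of fun v k' : Fin q => CN t ((v:ℕ)+(k':ℕ)+m+1)) := by
    ext i k
    rw [Matrix.mul_apply]
    have h1 : (∑ v : Fin q, (Matrix.of fun i v : Fin q =>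
          if (v:ℕ) ≤ (i:ℕ) then gg t 0 ((i:ℕ)-(v:ℕ)) else 0) i v
            * ((2*t) • Matrix.of fun v k' : Fin q => CN t ((v:ℕ)+(k':ℕ)+m+1)) v k)
        = ∑ v ∈ Finset.range q,
            (if v ≤ (i:ℕ) then gg t 0 ((i:ℕ)-v) else 0) * (2*t*CN t (v+(k:ℕ)+m+1)) := by
      rw [← Fin.sum_univ_eq_sum_range (fun v =>
        (if v ≤ (i:ℕ) then gg t 0 ((i:ℕ)-v) else 0) * (2*t*CN t (v+(k:ℕ)+m+1))) q]
      refine Finset.sum_congr rfl fun v _ => ?_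
      simp only [Matrix.smul_apply, Matrix.of_apply, smul_eq_mul]
    rw [h1]
    rw [← Finset.sum_subset (Finset.range_subset_range.mpr (show (i:ℕ)+1 ≤ q from i.isLt))
      (fun x _ hx => by
        rw [if_neg (fun h => hx (Finset.mem_range.mpr (by omega))), zero_mul])]
    simp only [Matrix.of_apply]
    exact (Finset.sum_congr rfl fun v hv => by
      rw [if_pos (Nat.lt_succ_iff.mp (Finset.mem_range.mp hv))]).symm
  have hLtri : (Matrix.of fun i v : Fin q =>
      if (v:ℕ) ≤ (i:ℕ) then gg t 0 ((i:ℕ)-(v:ℕ)) else 0).BlockTriangular OrderDual.toDual := by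
    intro i j hij
    have : (i:ℕ) < (j:ℕ) := hij
    simp only [Matrix.of_apply]
    rw [if_neg (by omega)]
  have hLdet : (Matrix.of fun i v : Fin q =>
      if (v:ℕ) ≤ (i:ℕ) then gg t 0 ((i:ℕ)-(v:ℕ)) else 0).det = 1 := by
    rw [Matrix.det_of_lowerTriangular _ hLtri]
    have : ∀ i : Fin q, (Matrix.of fun i v : Fin q =>
        if (v:ℕ) ≤ (i:ℕ) then gg t 0 ((i:ℕ)-(v:ℕ)) else 0) i i = 1 := by
      intro i
      simp only [Matrix.of_apply, le_refl, if_true, Nat.sub_self]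
      rw [gg_zero, if_pos rfl]
    simp [this, gg_zero]
  have hHmat : (Matrix.of fun v k' : Fin q => CN t ((v:ℕ)+(k':ℕ)+m+1))
      = Matrix.of fun i j : Fin q =>
          narayana t (((i:ℕ):ℤ) + ((j:ℕ):ℤ) + (m:ℤ) + 1) := by
    ext v k
    simp only [Matrix.of_apply]
    rw [show (((v:ℕ):ℤ) + ((k:ℕ):ℤ) + (m:ℤ) + 1) = (((v:ℕ)+(k:ℕ)+m+1 : ℕ) : ℤ) by
      push_cast; ring]
    rw [nar_cast]
  calc A.det = (A*T).det := by rw [Matrix.det_mul, hTdet, mul_one]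
    _ = ((A*T).submatrix (finSumFinEquiv.trans (finCongr hq))
          (finSumFinEquiv.trans (finCongr hq))).det :=
        (Matrix.det_submatrix_equiv_self _ (A*T)).symm
    _ = (-1 : ℚ) ^ ((m + 1).choose 2) * (2 * t) ^ q *
        (Matrix.of fun i j : Fin q =>
          narayana t (((i:ℕ):ℤ) + ((j:ℕ):ℤ) + (m:ℤ) + 1)).det := by
        rw [hsub, Matrix.det_fromBlocks_zero₁₂, det_J (m+1), hD, Matrix.det_mul,
          hLdet, one_mul, Matrix.det_smul, hHmat]
        simp [Fintype.card_fin]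
        ring

theorem stmt5 (t : ℚ) (m : ℕ) (hm : 1 ≤ m) :
    (∀ n : ℕ, m + 1 ≤ n →
      Matrix.det (Matrix.of fun i j : Fin n =>
          narayanaB t (((i : ℕ) : ℤ) + ((j : ℕ) : ℤ) - (m : ℤ))) =
        (-1 : ℚ) ^ ((m + 1).choose 2) * (2 * t) ^ (n - m - 1) *
          Matrix.det (Matrix.of fun i j : Fin (n - m - 1) =>
            narayana t (((i : ℕ) : ℤ) + ((j : ℕ) : ℤ) + (m : ℤ) + 1))) ∧
    (∀ n : ℕ, 1 ≤ n → n ≤ m →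
      Matrix.det (Matrix.of fun i j : Fin n =>
          narayanaB t (((i : ℕ) : ℤ) + ((j : ℕ) : ℤ) - (m : ℤ))) = 0) := by
  constructor
  · intro n hn
    exact main_pos t m n hn
  · intro n hn1 hn2
    have h0 : (0:ℕ) < n := by omega
    apply Matrix.det_eq_zero_of_row_eq_zero (⟨0, h0⟩ : Fin n)
    intro j
    simp only [Matrix.of_apply]
    apply narB_neg
    have hj : (j : ℕ) < n := j.isLt
    omega
end

section
/- Let a : ℤ → ℚ satisfy a(n) = 0 for n < 0 and a(0) ≠ 0, let A(x) = Σ_{n ≥ 0} a(n) x^n be the associated formal power series over ℚ, and let b(n) denote the coefficient of x^n in the multiplicative inverse power series 1/A(x). Then for every n ∈ ℕ, det(a(i+j−n+2))_{i,j=0}^{n−1} = (−1)^{binom(n+1,2)} · a(0)^{n+1} · b(n). -/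
open Finset

/-- Generalized matrix: last row is `a (j+s+1)`, other rows `a (i+j-m+2)`. -/
def Gm (a : ℤ → ℚ) (m s : ℕ) : Matrix (Fin m) (Fin m) ℚ :=
  Matrix.of fun i j => if (i : ℕ) + 1 = m then a ((j : ℕ) + s + 1)
    else a (((i : ℕ) : ℤ) + ((j : ℕ) : ℤ) - (m : ℤ) + 2)

lemma Gm_exp (a : ℤ → ℚ) (haneg : ∀ n : ℤ, n < 0 → a n = 0) (m s : ℕ) :
    (Gm a (m + 2) s).det =
      (-1) ^ m * a 0 * (Gm a (m + 1) (s + 1)).det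
        + (-1) ^ (m + 1) * a (s + 1) * (Gm a (m + 1) 0).det := by
  rw [show ((m + 2 : ℕ)) = (m + 1).succ from rfl, Matrix.det_succ_column_zero]
  have h1 : (⟨m, by omega⟩ : Fin (m + 2)) ≠ ⟨m + 1, by omega⟩ := by
    simp [Fin.ext_iff]
  rw [← Finset.sum_subset (Finset.subset_univ {(⟨m, by omega⟩ : Fin (m+2)), ⟨m+1, by omega⟩})
      ?_, Finset.sum_pair h1]
  · congr 1
    · -- term at row m
      have hA : Gm a (m+2) s ⟨m, by omega⟩ 0 = a 0 := by
        simp only [Gm, Matrix.of_apply]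
        rw [if_neg (by omega)]
        norm_num
      have hsub : (Gm a (m+2) s).submatrix (⟨m, by omega⟩ : Fin (m+2)).succAbove Fin.succ
          = Gm a (m+1) (s+1) := by
        ext i j
        have hsa : (((⟨m, by omega⟩ : Fin (m+2)).succAbove i : Fin (m+2)) : ℕ)
            = if (i : ℕ) < m then (i : ℕ) else (i : ℕ) + 1 := by
          simp only [Fin.succAbove, Fin.lt_def, Fin.coe_castSucc, Fin.val_succ]
          split_ifs with h h2 h3 <;> simp_all <;> omega
        simp only [Matrix.submatrix_apply, Gm, Matrix.of_apply, hsa, Fin.val_succ]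
        have hilt := i.isLt
        split_ifs <;> try (congr 1; push_cast; omega)
        all_goals omega
      rw [hA, hsub]
    · -- term at row m+1 (last)
      have hA : Gm a (m+2) s ⟨m+1, by omega⟩ 0 = a (s+1) := by
        simp [Gm]
      have hsub : (Gm a (m+2) s).submatrix (⟨m+1, by omega⟩ : Fin (m+2)).succAbove Fin.succ
          = Gm a (m+1) 0 := by
        ext i j
        have hlast : (⟨m+1, by omega⟩ : Fin (m+2)) = Fin.last (m+1) := rfl
        rw [hlast]
        simp only [Matrix.submatrix_apply, Fin.succAbove_last, Gm, Matrix.of_apply,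
          Fin.coe_castSucc, Fin.val_succ]
        have hilt := i.isLt
        split_ifs <;> try (congr 1; push_cast; omega)
        all_goals omega
      rw [hA, hsub]
  · intro i _ hi
    simp only [Finset.mem_insert, Finset.mem_singleton] at hi
    push_neg at hi
    have hi1 : (i : ℕ) < m := by
      have := i.isLt
      rcases hi with ⟨h1, h2⟩
      simp only [ne_eq, Fin.ext_iff] at h1 h2
      omega
    have hA : Gm a (m+2) s i 0 = 0 := by
      simp only [Gm, Matrix.of_apply]
      rw [if_neg (by omega)]
      apply haneg
      norm_num
      omega
    rw [hA]
    ring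

noncomputable def bc (a : ℤ → ℚ) (k : ℕ) : ℚ :=
  PowerSeries.coeff k ((PowerSeries.mk fun k : ℕ => a (k : ℤ))⁻¹)

lemma bc_zero (a : ℤ → ℚ) (ha0 : a 0 ≠ 0) : bc a 0 = (a 0)⁻¹ := by
  rw [bc, PowerSeries.coeff_zero_eq_constantCoeff, PowerSeries.constantCoeff_inv,
    PowerSeries.constantCoeff_mk]
  norm_num

lemma bc_conv (a : ℤ → ℚ) (ha0 : a 0 ≠ 0) (m : ℕ) :
    ∑ t ∈ Finset.range (m + 1), a t * bc a (m - t) = if m = 0 then 1 else 0 := by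
  have h := PowerSeries.mul_inv_cancel (PowerSeries.mk fun k : ℕ => a (k : ℤ))
    (by rwa [PowerSeries.constantCoeff_mk])
  have h2 := congrArg (PowerSeries.coeff m) h
  rw [PowerSeries.coeff_mul, Finset.Nat.sum_antidiagonal_eq_sum_range_succ_mk] at h2
  simp only [PowerSeries.coeff_mk] at h2
  simp only [bc]
  rw [h2, PowerSeries.coeff_one]

lemma bc_conv' (a : ℤ → ℚ) (ha0 : a 0 ≠ 0) (m : ℕ) :
    ∑ t ∈ Finset.range (m + 1), a (((0 : ℕ) : ℤ) + t + 1) * bc a (m - t)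
      = -(a 0 * bc a (m + 1)) := by
  have h := bc_conv a ha0 (m + 1)
  rw [if_neg (by omega), Finset.sum_range_succ'] at h
  simp only [Nat.cast_zero, Nat.sub_zero] at h
  have e : ∀ t ∈ Finset.range (m + 1),
      a (((0 : ℕ) : ℤ) + t + 1) * bc a (m - t) = a ((t + 1 : ℕ)) * bc a (m + 1 - (t + 1)) := by
    intro t ht
    rw [Finset.mem_range] at ht
    congr 2
    · push_cast; ring
    · omega
  rw [Finset.sum_congr rfl e]
  linarith [h]

lemma Gm_det (a : ℤ → ℚ) (haneg : ∀ n : ℤ, n < 0 → a n = 0) (ha0 : a 0 ≠ 0) (m s : ℕ) :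
    (Gm a (m + 1) s).det = (-1) ^ ((m + 1).choose 2 + m) * a 0 ^ (m + 1) *
      ∑ t ∈ Finset.range (m + 1), a (s + t + 1) * bc a (m - t) := by
  induction m generalizing s with
  | zero =>
      rw [Matrix.det_fin_one]
      have e : (Gm a 1 s) 0 0 = a (s + 1) := by
        simp only [Gm, Matrix.of_apply, if_pos rfl]
        congr 1
        norm_num
      rw [e]
      rw [show (0:ℕ) + 1 = 1 from rfl, Finset.sum_range_one, bc_zero a ha0]
      norm_num [Nat.choose]
      field_simp
  | succ m ih =>
      rw [Gm_exp a haneg m s, ih, ih, bc_conv' a ha0 m]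
      have hSs : ∑ t ∈ Finset.range (m + 1 + 1), a (s + t + 1) * bc a (m + 1 - t)
          = (∑ t ∈ Finset.range (m + 1), a (((s + 1 : ℕ) : ℤ) + t + 1) * bc a (m - t))
            + a (s + 1) * bc a (m + 1) := by
        rw [Finset.sum_range_succ']
        congr 1
        · apply Finset.sum_congr rfl
          intro t ht
          rw [Finset.mem_range] at ht
          congr 2
          · push_cast; ring
          · omega
      rw [hSs]
      have hexp : (m + 1 + 1).choose 2 + (m + 1) = ((m + 1).choose 2 + m) + (m + 2) := by
        have h : (m + 1 + 1).choose 2 = (m + 1).choose 1 + (m + 1).choose 2 :=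
          Nat.choose_succ_succ (m + 1) 1
        rw [Nat.choose_one_right] at h
        omega
      rw [hexp, pow_add]
      ring

theorem stmt8 (a : ℤ → ℚ) (haneg : ∀ n : ℤ, n < 0 → a n = 0) (ha0 : a 0 ≠ 0) (n : ℕ) :
    Matrix.det (Matrix.of fun i j : Fin n =>
        a (((i : ℕ) : ℤ) + ((j : ℕ) : ℤ) - (n : ℤ) + 2)) =
      (-1 : ℚ) ^ ((n + 1).choose 2) * (a 0) ^ (n + 1) *
        PowerSeries.coeff n ((PowerSeries.mk fun k : ℕ => a (k : ℤ))⁻¹) := by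
  rw [show PowerSeries.coeff n ((PowerSeries.mk fun k : ℕ => a (k : ℤ))⁻¹) = bc a n from rfl]
  cases n with
  | zero =>
      rw [Matrix.det_fin_zero, bc_zero a ha0]
      norm_num [Nat.choose]
      rw [mul_inv_cancel₀ ha0]
  | succ m =>
      have hmat : (Matrix.of fun i j : Fin (m + 1) =>
          a (((i : ℕ) : ℤ) + ((j : ℕ) : ℤ) - ((m + 1 : ℕ) : ℤ) + 2)) = Gm a (m + 1) 0 := by
        ext i j
        simp only [Matrix.of_apply, Gm]
        rcases eq_or_ne ((i : ℕ) + 1) (m + 1) with h | h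
        · rw [if_pos h]
          congr 1 <;> (push_cast; omega)
        · rw [if_neg h]
      rw [hmat, Gm_det a haneg ha0 m 0, bc_conv' a ha0 m]
      have hexp : (m + 1 + 1).choose 2 = ((m + 1).choose 2 + m) + 1 := by
        have h : (m + 1 + 1).choose 2 = (m + 1).choose 1 + (m + 1).choose 2 :=
          Nat.choose_succ_succ (m + 1) 1
        rw [Nat.choose_one_right] at h
        omega
      rw [hexp, pow_add]
      ring
end

section
/- Let C(x) = Σ_{n ≥ 0} C_n x^n be the generating function of the Catalan numbers as a formal power series over ℚ. Then for every integer k ≥ 1 and every n ∈ ℕ, the coefficient of x^n in C(x)^k equals binom(2n+k−1,n) − binom(2n+k−1,n−1) = (k/(2n+k)) · binom(2n+k,n) (with the convention binom(2n+k−1,−1) = 0). -/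
open Finset PowerSeries

noncomputable def CQ : ℚ⟦X⟧ := PowerSeries.mk fun m : ℕ => (catalan m : ℚ)

lemma C_eq : CQ = 1 + X * CQ ^ 2 := by
  ext n
  cases n with
  | zero => simp [CQ]
  | succ n =>
    rw [map_add, coeff_succ_X_mul, sq, coeff_mul]
    simp only [CQ, coeff_mk, coeff_one, Nat.succ_ne_zero, if_false, zero_add]
    rw [catalan_succ' n]
    push_cast
    rfl

noncomputable def B (n k : ℕ) : ℚ :=
  ((2 * n + k - 1).choose n : ℚ) - (if n = 0 then 0 else ((2 * n + k - 1).choose (n - 1) : ℚ))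

lemma key : ∀ n k : ℕ, PowerSeries.coeff n (CQ ^ k) = B n k := by
  intro n
  induction n with
  | zero =>
    intro k
    rw [coeff_zero_eq_constantCoeff, map_pow]
    simp [CQ, B, constantCoeff_mk]
  | succ n ih =>
    intro k
    induction k with
    | zero =>
      simp only [pow_zero, B, Nat.succ_ne_zero, if_false, coeff_one, Nat.succ_ne_zero, if_false]
      have h1 : (2 * (n + 1) + 0 - 1) = 2 * n + 1 := by omega
      have h2 : (2 * n + 1).choose (n + 1) = (2 * n + 1).choose n := by
        rw [← Nat.choose_symm (by omega)]
        congr 1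
        omega
      rw [h1, h2]
      simp
    | succ k ihk =>
      have step : (CQ : ℚ⟦X⟧) ^ (k + 1) = CQ ^ k + X * CQ ^ (k + 2) := by
        calc CQ ^ (k+1) = CQ ^ k * CQ := by ring
        _ = CQ ^ k * (1 + X * CQ ^ 2) := by rw [← C_eq]
        _ = CQ ^ k + X * CQ ^ (k+2) := by ring
      rw [step, map_add, coeff_succ_X_mul, ihk, ih (k + 2)]
      -- B (n+1) (k+1) = B (n+1) k + B n (k+2)
      simp only [B, Nat.succ_ne_zero, if_false]
      have e1 : 2 * (n + 1) + (k + 1) - 1 = 2 * n + k + 2 := by omega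
      have e2 : 2 * (n + 1) + k - 1 = 2 * n + k + 1 := by omega
      have e3 : 2 * n + (k + 2) - 1 = 2 * n + k + 1 := by omega
      rw [e1, e2, e3]
      rcases Nat.eq_zero_or_pos n with hn | hn
      · subst hn
        simp [Nat.choose_one_right]
        ring
      · have hne : n ≠ 0 := hn.ne'
        rw [if_neg hne]
        have p1 : (2 * n + k + 2).choose (n + 1)
            = (2*n+k+1).choose n + (2*n+k+1).choose (n+1) :=
          Nat.choose_succ_succ (2*n+k+1) n
        have p2 : (2 * n + k + 2).choose n
            = (2*n+k+1).choose (n-1) + (2*n+k+1).choose n := by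
          obtain ⟨m, rfl⟩ := Nat.exists_eq_succ_of_ne_zero hne
          simpa [Nat.succ_eq_add_one] using Nat.choose_succ_succ (2*(m+1)+k+1) m
        simp only [Nat.add_sub_cancel]
        rw [p1, p2]
        push_cast
        ring

theorem stmt13 (k : ℕ) (hk : 1 ≤ k) (n : ℕ) :
    PowerSeries.coeff n ((PowerSeries.mk fun m : ℕ => (catalan m : ℚ)) ^ k) =
        ((2 * n + k - 1).choose n : ℚ) -
          (if n = 0 then 0 else ((2 * n + k - 1).choose (n - 1) : ℚ)) ∧
      ((2 * n + k - 1).choose n : ℚ) -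
          (if n = 0 then 0 else ((2 * n + k - 1).choose (n - 1) : ℚ)) =
        (k : ℚ) / (2 * (n : ℚ) + (k : ℚ)) * ((2 * n + k).choose n : ℚ) := by
  constructor
  · exact key n k
  · rcases Nat.eq_zero_or_pos n with hn | hn
    · subst hn
      have h1 : 2 * 0 + k - 1 = k - 1 := by omega
      rw [h1]
      simp only [if_pos rfl, Nat.choose_zero_right]
      have hk0 : (k : ℚ) ≠ 0 := Nat.cast_ne_zero.mpr (by omega)
      field_simp
      simp
    · have hne : n ≠ 0 := hn.ne'
      rw [if_neg hne]
      obtain ⟨m, rfl⟩ : ∃ m, n = m + 1 := ⟨n - 1, by omega⟩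
      simp only [Nat.add_sub_cancel]
      have e1 : 2 * (m+1) + k - 1 = 2*m+k+1 := by omega
      have e2 : 2 * (m+1) + k = 2*m+k+2 := by omega
      rw [e1, e2]
      -- Pascal: choose (2m+k+2) (m+1) = choose(2m+k+1) m + choose(2m+k+1)(m+1)
      have p1 : (2*m+k+2).choose (m+1) = (2*m+k+1).choose m + (2*m+k+1).choose (m+1) :=
        Nat.choose_succ_succ (2*m+k+1) m
      -- (2m+k+2) * choose(2m+k+1) m = (m+1) * choose(2m+k+2)(m+1)
      have p2 : (2*m+k+2) * (2*m+k+1).choose m = (2*m+k+2).choose (m+1) * (m+1) := by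
        simpa [Nat.succ_eq_add_one] using Nat.add_one_mul_choose_eq (2*m+k+1) m
      have hd : (2 * ((m:ℚ)+1) + k) ≠ 0 := by
        have : (0:ℚ) < 2 * ((m:ℚ)+1) + k := by positivity
        exact this.ne'
      push_cast
      rw [div_mul_eq_mul_div, eq_div_iff hd]
      have p1q : ((2*m+k+2).choose (m+1) : ℚ)
          = ((2*m+k+1).choose m : ℚ) + ((2*m+k+1).choose (m+1) : ℚ) := by
        exact_mod_cast congrArg (Nat.cast : ℕ → ℚ) p1
      have p2q : ((2*m+k+2) : ℚ) * ((2*m+k+1).choose m : ℚ)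
          = ((2*m+k+2).choose (m+1) : ℚ) * ((m:ℚ)+1) := by
        exact_mod_cast congrArg (Nat.cast : ℕ → ℚ) p2
      push_cast at p1q p2q ⊢
      nlinarith [p1q, p2q]
end

section
/- Fix b ∈ ℚ and let C(x) = Σ_{n ≥ 0} C_n x^n be the generating function of the Catalan numbers as a formal power series over ℚ. Then Σ_{n ≥ 0} M_b(n) x^n = C(x)/(1 − b·x·C(x)); equivalently, (1 − b·x·C(x)) · Σ_{n ≥ 0} M_b(n) x^n = C(x) in ℚ[[x]]. -/
open Finset

/-- `M_b(n) = ∑_{k=0}^n (C(n+k,k) - C(n+k,k-1)) b^{n-k}`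
(with the convention `C(n+k,-1) = 0`). -/
def MbN (b : ℚ) (n : ℕ) : ℚ :=
  ∑ k ∈ Finset.range (n + 1),
    (((n + k).choose k : ℚ) - if k = 0 then 0 else ((n + k).choose (k - 1) : ℚ)) * b ^ (n - k)

/-- The ballot numbers (as rationals). -/
def Aq (n k : ℕ) : ℚ :=
  ((n + k).choose k : ℚ) - if k = 0 then 0 else ((n + k).choose (k - 1) : ℚ)

lemma MbN_eq (b : ℚ) (n : ℕ) :
    MbN b n = ∑ k ∈ Finset.range (n + 1), Aq n k * b ^ (n - k) := rfl

lemma Aq_zero (n : ℕ) : Aq n 0 = 1 := by simp [Aq]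

lemma Aq_self (n : ℕ) : Aq n n = (catalan n : ℚ) := by
  rcases n with _ | m
  · simp [Aq]
  set n := m + 1
  have h1 : (2 * n).choose n * n = (2 * n).choose (n - 1) * (n + 1) := by
    have h := Nat.choose_succ_right_eq (2 * (m + 1)) m
    have e : 2 * (m + 1) - m = m + 2 := by omega
    rw [e] at h
    simpa [n, Nat.succ_sub_one] using h
  have h2 : (n + 1) * catalan n = (2 * n).choose n := by
    rw [succ_mul_catalan_eq_centralBinom]; rfl
  have hn : ((n : ℚ) + 1) ≠ 0 := by positivity
  have key : ((n : ℚ) + 1) * Aq n n = ((n : ℚ) + 1) * (catalan n : ℚ) := by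
    have e1 : ((2 * n).choose n : ℚ) * n = ((2 * n).choose (n - 1) : ℚ) * (n + 1) := by
      exact_mod_cast congrArg (Nat.cast (R := ℚ)) h1
    have e2 : ((n : ℚ) + 1) * (catalan n : ℚ) = ((2 * n).choose n : ℚ) := by
      exact_mod_cast congrArg (Nat.cast (R := ℚ)) h2
    simp only [Aq, if_neg (show n ≠ 0 from Nat.succ_ne_zero m), ← two_mul]
    nlinarith [e1, e2]
  exact mul_left_cancel₀ hn key

lemma Aq_succ_self (n : ℕ) : Aq n (n + 1) = 0 := by
  have h : (n + (n + 1)).choose (n + 1) = (n + (n + 1)).choose n := by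
    rw [← Nat.choose_symm (by omega)]
    congr 1
    omega
  simp [Aq, h]

lemma Aq_pascal (n k : ℕ) : Aq (n + 1) (k + 1) = Aq n (k + 1) + Aq (n + 1) k := by
  rcases k with _ | k
  · simp only [Aq, if_neg (Nat.succ_ne_zero 0), if_pos rfl]
    norm_num [Nat.choose_one_right, Nat.choose_zero_right]
  · simp only [Aq, if_neg (Nat.succ_ne_zero _), Nat.succ_sub_one]
    have h1 : (n + 1 + (k + 1 + 1)) = (n + (k + 1 + 1)) + 1 := by ring
    have h2 : (n + 1 + (k + 1)) = n + (k + 1 + 1) := by ring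
    rw [h1, h2, Nat.choose_succ_succ (n + (k + 1 + 1)) (k + 1),
      Nat.choose_succ_succ (n + (k + 1 + 1)) k]
    push_cast
    ring

/-- Convolution identity for ballot numbers. -/
lemma Aq_conv : ∀ n : ℕ, ∀ K ≤ n,
    Aq (n + 1) K = ∑ i ∈ Finset.range (K + 1), (catalan i : ℚ) * Aq (n - i) (K - i) := by
  intro n
  induction n with
  | zero =>
    intro K hK
    interval_cases K
    simp [Aq_zero]
  | succ n ih =>
    intro K
    induction K with
    | zero => intro _; simp [Aq_zero]
    | succ K ihK =>
      intro hK
      have hKn : K ≤ n := by omega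
      rw [Aq_pascal, ihK (by omega)]
      have key : Aq (n + 1) (K + 1) =
          ∑ i ∈ Finset.range (K + 2), (catalan i : ℚ) * Aq (n - i) (K + 1 - i) := by
        rcases eq_or_lt_of_le hKn with h | h
        · -- K = n : degenerate case
          subst h
          rw [Finset.sum_range_succ]
          have hz : ∀ i ∈ Finset.range (K + 1), (catalan i : ℚ) * Aq (K - i) (K + 1 - i) = 0 := by
            intro i hi
            rw [Finset.mem_range] at hi
            have : K + 1 - i = (K - i) + 1 := by omega
            rw [this, Aq_succ_self, mul_zero]
          rw [Finset.sum_eq_zero hz, zero_add]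
          have e1 : K - (K + 1) = 0 := by omega
          rw [e1, Nat.sub_self, Aq_zero, mul_one, Aq_self]
        · exact ih (K + 1) (by omega)
      rw [key, Finset.sum_range_succ]
      have hlast : (catalan (K + 1) : ℚ) * Aq (n - (K + 1)) (K + 1 - (K + 1)) = (catalan (K + 1) : ℚ) := by
        rw [Nat.sub_self, Aq_zero, mul_one]
      rw [hlast]
      -- now goal: ∑_{i≤K} cat i Aq(n-i)(K+1-i) + cat(K+1) + ∑_{i≤K} cat i Aq(n+1-i)(K-i)
      --   = ∑_{i≤K+1} cat i Aq(n+1-i)(K+1-i)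
      rw [Finset.sum_range_succ (fun i => (catalan i : ℚ) * Aq (n + 1 - i) (K + 1 - i)) (K + 1)]
      have hlast2 : (catalan (K + 1) : ℚ) * Aq (n + 1 - (K + 1)) (K + 1 - (K + 1)) = (catalan (K + 1) : ℚ) := by
        rw [Nat.sub_self, Aq_zero, mul_one]
      rw [hlast2]
      have hsplit : ∀ i ∈ Finset.range (K + 1),
          (catalan i : ℚ) * Aq (n + 1 - i) (K + 1 - i) =
          (catalan i : ℚ) * Aq (n - i) (K + 1 - i) + (catalan i : ℚ) * Aq (n + 1 - i) (K - i) := by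
        intro i hi
        rw [Finset.mem_range] at hi
        have e1 : n + 1 - i = (n - i) + 1 := by omega
        have e2 : K + 1 - i = (K - i) + 1 := by omega
        rw [e1, e2, Aq_pascal, ← e1]
        ring
      rw [Finset.sum_congr rfl hsplit, Finset.sum_add_distrib]
      ring

/-- Recurrence for `MbN`. -/
lemma MbN_rec (b : ℚ) (n : ℕ) :
    MbN b (n + 1) = (catalan (n + 1) : ℚ) +
      b * ∑ i ∈ Finset.range (n + 1), (catalan i : ℚ) * MbN b (n - i) := by
  rw [MbN_eq, Finset.sum_range_succ, Nat.sub_self, pow_zero, mul_one, Aq_self]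
  have step1 : ∑ K ∈ Finset.range (n + 1), Aq (n + 1) K * b ^ (n + 1 - K) =
      ∑ K ∈ Finset.range (n + 1), ∑ i ∈ Finset.range (K + 1),
        (catalan i : ℚ) * Aq (n - i) (K - i) * b ^ (n + 1 - K) := by
    refine Finset.sum_congr rfl fun K hK => ?_
    rw [Finset.mem_range] at hK
    rw [Aq_conv n K (by omega), Finset.sum_mul]
  rw [step1]
  have step2 : ∑ K ∈ Finset.range (n + 1), ∑ i ∈ Finset.range (K + 1),
        (catalan i : ℚ) * Aq (n - i) (K - i) * b ^ (n + 1 - K) =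
      ∑ i ∈ Finset.range (n + 1), ∑ K ∈ Finset.Ico i (n + 1),
        (catalan i : ℚ) * Aq (n - i) (K - i) * b ^ (n + 1 - K) := by
    have := Finset.sum_Ico_Ico_comm 0 (n + 1)
      (fun i K => (catalan i : ℚ) * Aq (n - i) (K - i) * b ^ (n + 1 - K))
    simp only [Finset.range_eq_Ico]
    exact this.symm
  rw [step2]
  have step3 : ∀ i ∈ Finset.range (n + 1),
      ∑ K ∈ Finset.Ico i (n + 1), (catalan i : ℚ) * Aq (n - i) (K - i) * b ^ (n + 1 - K) =
      b * ((catalan i : ℚ) * MbN b (n - i)) := by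
    intro i hi
    rw [Finset.mem_range] at hi
    rw [Finset.sum_Ico_eq_sum_range]
    have hlen : n + 1 - i = (n - i) + 1 := by omega
    rw [hlen, MbN_eq, Finset.mul_sum, Finset.mul_sum]
    refine Finset.sum_congr rfl fun k hk => ?_
    rw [Finset.mem_range] at hk
    have e1 : i + k - i = k := by omega
    have e2 : n + 1 - (i + k) = (n - i - k) + 1 := by omega
    rw [e1, e2, pow_succ]
    ring
  rw [Finset.sum_congr rfl step3, ← Finset.mul_sum]
  ring

theorem stmt14 (b : ℚ) :
    (1 - PowerSeries.C b * PowerSeries.X * PowerSeries.mk (fun n : ℕ => (catalan n : ℚ))) *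
        PowerSeries.mk (fun n : ℕ => MbN b n) =
      PowerSeries.mk fun n : ℕ => (catalan n : ℚ) := by
  ext n
  rw [sub_mul, one_mul, map_sub]
  have hassoc : PowerSeries.C b * PowerSeries.X * PowerSeries.mk (fun n : ℕ => (catalan n : ℚ)) *
      PowerSeries.mk (fun n : ℕ => MbN b n) =
      PowerSeries.C b * (PowerSeries.X * (PowerSeries.mk (fun n : ℕ => (catalan n : ℚ)) *
        PowerSeries.mk (fun n : ℕ => MbN b n))) := by ring
  rw [hassoc, PowerSeries.coeff_C_mul]
  rcases n with _ | n
  · rw [PowerSeries.coeff_zero_X_mul, mul_zero, sub_zero, PowerSeries.coeff_mk,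
      PowerSeries.coeff_mk]
    rw [MbN_eq, Finset.sum_range_one, Aq_zero, Nat.sub_self, pow_zero, mul_one,
      catalan_zero, Nat.cast_one]
  · rw [PowerSeries.coeff_succ_X_mul, PowerSeries.coeff_mul, PowerSeries.coeff_mk,
      Finset.Nat.sum_antidiagonal_eq_sum_range_succ_mk]
    simp only [PowerSeries.coeff_mk]
    rw [MbN_rec b n]
    ring
end

section
/- For every n ∈ ℕ, Σ_{k=0}^{n} (binom(n+k,k) − binom(n+k,k−1)) = C_{n+1} (with the convention binom(n+k,−1) = 0); that is, M_1(n) equals the shifted Catalan number C_{n+1}. -/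
open Finset

lemma aux15 (n m : ℕ) :
    ∑ k ∈ Finset.range (m + 1),
        (((n + k).choose k : ℚ) - if k = 0 then 0 else ((n + k).choose (k - 1) : ℚ)) =
      ((n + m + 1).choose m : ℚ) - if m = 0 then 0 else ((n + m + 1).choose (m - 1) : ℚ) := by
  induction m with
  | zero => simp
  | succ m ih =>
      rw [Finset.sum_range_succ, ih]
      rcases Nat.eq_zero_or_pos m with hm | hm
      · subst hm
        simp [Nat.choose_one_right]
        ring
      · obtain ⟨m', rfl⟩ := Nat.exists_eq_succ_of_ne_zero hm.ne'
        simp only [if_neg (Nat.succ_ne_zero m'), if_neg (Nat.succ_ne_zero (m' + 1)),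
          Nat.succ_sub_one, Nat.succ_eq_add_one,
          show n + (m' + 1) = n + m' + 1 from by ring,
          show n + (m' + 1 + 1) = n + m' + 2 from by ring,
          show n + (m' + 1) + 1 = n + m' + 2 from by ring,
          show n + (m' + 1 + 1) + 1 = n + m' + 3 from by ring]
        have h1 : (n + m' + 3).choose (m' + 1 + 1)
            = (n + m' + 2).choose (m' + 1) + (n + m' + 2).choose (m' + 1 + 1) :=
          Nat.choose_succ_succ' (n + m' + 2) (m' + 1)
        have h2 : (n + m' + 3).choose (m' + 1)
            = (n + m' + 2).choose m' + (n + m' + 2).choose (m' + 1) :=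
          Nat.choose_succ_succ' (n + m' + 2) m'
        rw [h1, h2]
        push_cast
        ring

theorem stmt15 (n : ℕ) :
    ∑ k ∈ Finset.range (n + 1),
        (((n + k).choose k : ℚ) - if k = 0 then 0 else ((n + k).choose (k - 1) : ℚ)) =
      (catalan (n + 1) : ℚ) := by
  rw [aux15 n n]
  rcases Nat.eq_zero_or_pos n with hn | hn
  · subst hn; simp
  rw [if_neg hn.ne']
  have hcatN := succ_mul_catalan_eq_centralBinom (n + 1)
  have hcat : ((n : ℚ) + 2) * catalan (n + 1) = ((n + 1).centralBinom : ℚ) := by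
    have : (((n + 1 + 1) * catalan (n + 1) : ℕ) : ℚ) = (((n + 1).centralBinom : ℕ) : ℚ) := by
      exact congrArg (Nat.cast : ℕ → ℚ) hcatN
    push_cast at this
    linarith
  have hcb : (n + 1).centralBinom = 2 * (n + n + 1).choose n := by
    rw [Nat.centralBinom]
    have : 2 * (n + 1) = (n + n + 1) + 1 := by ring
    rw [this, Nat.choose_succ_succ' (n + n + 1) n]
    have hsymm : (n + n + 1).choose (n + 1) = (n + n + 1).choose n := by
      apply Nat.choose_symm_of_eq_add; ring
    omega
  have hrel : (n + n + 1).choose n * n = (n + n + 1).choose (n - 1) * (n + 2) := by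
    have := Nat.choose_succ_right_eq (n + n + 1) (n - 1)
    have h1 : n - 1 + 1 = n := by omega
    have h2 : n + n + 1 - (n - 1) = n + 2 := by omega
    rw [h1, h2] at this
    exact this
  have hnz : ((n : ℚ) + 2) ≠ 0 := by positivity
  have key : ((n : ℚ) + 2) * (((n + n + 1).choose n : ℚ) - ((n + n + 1).choose (n - 1) : ℚ))
      = ((n : ℚ) + 2) * (catalan (n + 1) : ℚ) := by
    rw [hcat]
    have hrelQ : ((n + n + 1).choose n : ℚ) * n = ((n + n + 1).choose (n - 1) : ℚ) * (n + 2) :=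
      by exact_mod_cast hrel
    have hcbQ : ((n + 1).centralBinom : ℚ) = 2 * ((n + n + 1).choose n : ℚ) := by
      exact_mod_cast hcb
    rw [hcbQ]
    nlinarith [hrelQ]
  have := mul_left_cancel₀ hnz key
  exact this
end

section
/- For every n ∈ ℕ, Σ_{k=0}^{n} (binom(n+k,k) − binom(n+k,k−1)) · 2^{n−k} = binom(2n+1,n) (with the convention binom(n+k,−1) = 0); that is, M_2(n) = binom(2n+1,n). -/
open Finset

private lemma T_reindex (n : ℕ) :
    ∑ k ∈ Finset.range (n + 1),
        (if k = 0 then (0:ℚ) else ((n + k).choose (k - 1) : ℚ)) * 2 ^ (n - k)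
      = ∑ j ∈ Finset.range n, ((n + 1 + j).choose j : ℚ) * 2 ^ (n - 1 - j) := by
  rw [Finset.sum_range_succ']
  simp only [if_pos, zero_mul, add_zero, Nat.succ_ne_zero, if_false, Nat.add_sub_cancel]
  refine Finset.sum_congr rfl fun j hj => ?_
  have h1 : n + (j + 1) = n + 1 + j := by ring
  have h2 : n - (j + 1) = n - 1 - j := by omega
  rw [h1, h2]

private lemma B_split (n : ℕ) :
    ∑ k ∈ Finset.range (n + 1), ((n + 1 + k).choose k : ℚ) * 2 ^ (n - k)
      = ∑ k ∈ Finset.range (n + 1), ((n + k).choose k : ℚ) * 2 ^ (n - k)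
        + ∑ k ∈ Finset.range (n + 1),
            (if k = 0 then (0:ℚ) else ((n + k).choose (k - 1) : ℚ)) * 2 ^ (n - k) := by
  rw [← Finset.sum_add_distrib]
  refine Finset.sum_congr rfl fun k hk => ?_
  rw [← add_mul]
  congr 1
  rcases k with _ | j
  · simp
  · have h : n + 1 + (j + 1) = (n + (j + 1)) + 1 := by ring
    rw [h, Nat.choose_succ_succ]
    push_cast
    simp [add_comm]

private lemma B_two (n : ℕ) :
    ∑ k ∈ Finset.range (n + 1), ((n + 1 + k).choose k : ℚ) * 2 ^ (n - k)
      = 2 * ∑ j ∈ Finset.range n, ((n + 1 + j).choose j : ℚ) * 2 ^ (n - 1 - j)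
        + ((2 * n + 1).choose n : ℚ) := by
  rw [Finset.sum_range_succ, Finset.mul_sum]
  congr 1
  · refine Finset.sum_congr rfl fun k hk => ?_
    have hk' : k < n := Finset.mem_range.mp hk
    have h : n - k = (n - 1 - k) + 1 := by omega
    rw [h, pow_succ]; ring
  · have h : n + 1 + n = 2 * n + 1 := by ring
    simp [h]

theorem stmt16 (n : ℕ) :
    ∑ k ∈ Finset.range (n + 1),
        (((n + k).choose k : ℚ) - if k = 0 then 0 else ((n + k).choose (k - 1) : ℚ)) *
          2 ^ (n - k) =
      ((2 * n + 1).choose n : ℚ) := by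
  have h1 := B_split n
  have h2 := B_two n
  have h3 := T_reindex n
  have h4 : ∑ k ∈ Finset.range (n + 1),
      (((n + k).choose k : ℚ) - if k = 0 then 0 else ((n + k).choose (k - 1) : ℚ)) *
        2 ^ (n - k)
      = ∑ k ∈ Finset.range (n + 1), ((n + k).choose k : ℚ) * 2 ^ (n - k)
        - ∑ k ∈ Finset.range (n + 1),
            (if k = 0 then (0:ℚ) else ((n + k).choose (k - 1) : ℚ)) * 2 ^ (n - k) := by
    rw [← Finset.sum_sub_distrib]
    exact Finset.sum_congr rfl fun k hk => by rw [sub_mul]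
  linarith
end

section
/- Fix b ∈ ℚ. The multiplicative inverse of the formal power series Σ_{n ≥ 0} M_b(n) x^n in ℚ[[x]] is 1 − (1+b)x − Σ_{n ≥ 2} C_{n−1} x^n; that is, (Σ_{n ≥ 0} M_b(n) x^n) · (1 − (1+b)x − Σ_{n ≥ 2} C_{n−1} x^n) = 1 in ℚ[[x]]. -/
open Finset

open PowerSeries

noncomputable def Cat : ℚ⟦X⟧ := PowerSeries.mk fun n => (catalan n : ℚ)

lemma cat_eq : Cat = 1 + X * Cat ^ 2 := by
  ext n
  cases n with
  | zero => simp [Cat]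
  | succ n =>
    rw [map_add, coeff_one, if_neg (Nat.succ_ne_zero n), coeff_succ_X_mul, zero_add,
      pow_two, coeff_mul]
    simp only [Cat, coeff_mk]
    rw [catalan_succ' n]
    push_cast
    rfl

lemma catalan_diff (k : ℕ) :
    (catalan (k+1) : ℚ) = ((2*(k+1)).choose (k+1) : ℚ) - ((2*(k+1)).choose k : ℚ) := by
  have h1 : (k+1+1) * catalan (k+1) = (2*(k+1)).choose (k+1) :=
    succ_mul_catalan_eq_centralBinom (k+1)
  have h2 : (2*(k+1)).choose (k+1) * (k+1) = (2*(k+1)).choose k * (k+2) := by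
    rw [Nat.choose_succ_right_eq]
    congr 1
    omega
  have h1Q : ((k:ℚ)+2) * catalan (k+1) = ((2*(k+1)).choose (k+1) : ℚ) := by
    exact_mod_cast h1
  have h2Q : ((2*(k+1)).choose (k+1) : ℚ) * ((k:ℚ)+1) = ((2*(k+1)).choose k : ℚ) * ((k:ℚ)+2) := by
    exact_mod_cast h2
  have hk : ((k:ℚ)+2) ≠ 0 := by positivity
  have key : ((k:ℚ)+2) * (catalan (k+1) : ℚ)
      = ((k:ℚ)+2) * (((2*(k+1)).choose (k+1) : ℚ) - ((2*(k+1)).choose k : ℚ)) := by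
    linear_combination h1Q - h2Q
  exact mul_left_cancel₀ hk key

lemma coeff_cat_pow : ∀ k m : ℕ, (PowerSeries.coeff (R := ℚ) k) (Cat ^ (m+1))
    = ((2*k+m).choose k : ℚ) - (if k = 0 then 0 else ((2*k+m).choose (k-1) : ℚ)) := by
  intro k
  induction k using Nat.strong_induction_on with
  | _ k ih =>
  intro m
  match k with
  | 0 =>
    rw [coeff_zero_eq_constantCoeff, map_pow]
    simp [Cat]
  | Nat.succ k =>
    induction m with
    | zero =>
      rw [pow_one]
      simp only [Cat, coeff_mk, Nat.succ_ne_zero, if_false, Nat.succ_sub_one]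
      rw [catalan_diff]
      norm_num
    | succ m ihm =>
      have step : Cat ^ (m+2) = Cat ^ (m+1) + X * Cat ^ (m+3) := by
        calc Cat ^ (m+2) = Cat^(m+1) * Cat := by ring
        _ = Cat^(m+1) * (1 + X*Cat^2) := by rw [← cat_eq]
        _ = Cat^(m+1) + X * Cat^(m+3) := by ring
      rw [step, map_add, coeff_succ_X_mul, ihm, ih k (Nat.lt_succ_self k) (m+2)]
      simp only [Nat.succ_ne_zero, if_false, Nat.succ_sub_one]
      rcases k with _ | j
      · norm_num [Nat.choose_one_right]
        ring
      · rw [if_neg (Nat.succ_ne_zero j), Nat.succ_sub_one]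
        simp only [Nat.succ_eq_add_one]
        have c1 : 2 * (j+1+1) + m = 2*j+m+4 := by ring
        have c2 : 2 * (j+1) + (m+2) = 2*j+m+4 := by ring
        have c3 : 2 * (j+1+1) + (m+1) = 2*j+m+4+1 := by ring
        rw [c1, c2, c3, Nat.choose_succ_succ (2*j+m+4) (j+1),
          Nat.choose_succ_succ (2*j+m+4) j]
        push_cast
        ring

lemma coeff_S (b : ℚ) {i N : ℕ} (h : i ≤ N) :
    (PowerSeries.coeff (R := ℚ) i) (∑ m ∈ range (N+1), (PowerSeries.C (R := ℚ) b * X * Cat)^m * Cat)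
      = MbN b i := by
  rw [map_sum]
  have hterm : ∀ m, (PowerSeries.coeff (R := ℚ) i) ((PowerSeries.C (R := ℚ) b * X * Cat)^m * Cat)
      = b^m * ((PowerSeries.coeff (R := ℚ) i) (Cat^(m+1) * X^m)) := by
    intro m
    have e : (PowerSeries.C (R := ℚ) b * X * Cat)^m * Cat
        = PowerSeries.C (R := ℚ) (b^m) * (Cat^(m+1) * X^m) := by
      rw [map_pow]
      ring
    rw [e, coeff_C_mul]
  simp only [hterm, coeff_mul_X_pow']
  rw [← Finset.sum_subset (Finset.range_subset_range.2 (Nat.succ_le_succ h))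
    (fun x _ hnx => by
      rw [if_neg (by simp at hnx ⊢; omega), mul_zero])]
  rw [MbN, ← Finset.sum_range_reflect]
  apply Finset.sum_congr rfl
  intro m hm
  have hmi : m ≤ i := by simp at hm; omega
  simp only [Nat.succ_sub_one]
  rw [show i - (i - m) = m by omega, if_pos (Nat.sub_le i m), coeff_cat_pow,
    show 2*m + (i-m) = i + m by omega, mul_comm]

lemma Amul (b : ℚ) :
    (PowerSeries.mk (MbN b)) * (1 - PowerSeries.C (R := ℚ) b * X * Cat) = Cat := by
  ext n
  rw [coeff_mul]
  have h1 : ∀ p ∈ antidiagonal n,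
      (PowerSeries.coeff (R := ℚ) p.1) (PowerSeries.mk (MbN b))
          * (PowerSeries.coeff (R := ℚ) p.2) (1 - PowerSeries.C (R := ℚ) b * X * Cat)
        = (PowerSeries.coeff (R := ℚ) p.1)
            (∑ m ∈ range (n+1), (PowerSeries.C (R := ℚ) b * X * Cat)^m * Cat)
          * (PowerSeries.coeff (R := ℚ) p.2) (1 - PowerSeries.C (R := ℚ) b * X * Cat) := by
    intro p hp
    rw [Finset.HasAntidiagonal.mem_antidiagonal] at hp
    rw [coeff_mk, coeff_S b (show p.1 ≤ n by omega)]
  rw [Finset.sum_congr rfl h1, ← coeff_mul]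
  have h2 : (∑ m ∈ range (n+1), (PowerSeries.C (R := ℚ) b * X * Cat)^m * Cat)
        * (1 - PowerSeries.C (R := ℚ) b * X * Cat)
      = Cat - (PowerSeries.C (R := ℚ) b * X * Cat)^(n+1) * Cat := by
    rw [← Finset.sum_mul]
    have g := geom_sum_mul (PowerSeries.C (R := ℚ) b * X * Cat) (n+1)
    linear_combination (-Cat) * g
  rw [h2, map_sub]
  have h3 : (PowerSeries.C (R := ℚ) b * X * Cat)^(n+1) * Cat
      = ((PowerSeries.C (R := ℚ) b * Cat)^(n+1) * Cat) * X^(n+1) := by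
    rw [mul_pow, mul_pow]
    ring
  rw [h3, coeff_mul_X_pow', if_neg (by omega), sub_zero]

lemma Bexpr (b : ℚ) :
    PowerSeries.mk (fun n : ℕ =>
        if n = 0 then 1 else if n = 1 then -(1 + b) else -(catalan (n - 1) : ℚ))
      = 1 - PowerSeries.C (R := ℚ) b * X - X * Cat := by
  ext n
  rw [coeff_mk]
  match n with
  | 0 => simp
  | 1 =>
    simp [coeff_one, Cat]
    ring
  | (n+2) =>
    rw [map_sub, map_sub, coeff_one, coeff_succ_X_mul]
    simp [Cat, coeff_X]

/-- The series `1 - (1+b)x - ∑_{n ≥ 2} C_{n-1} x^n`. -/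
theorem stmt17 (b : ℚ) :
    PowerSeries.mk (fun n : ℕ => MbN b n) *
        PowerSeries.mk (fun n : ℕ =>
          if n = 0 then 1 else if n = 1 then -(1 + b) else -(catalan (n - 1) : ℚ)) =
      1 := by
  rw [Bexpr b]
  have hC : Cat ≠ 0 := by
    intro h
    have := congrArg (PowerSeries.constantCoeff (R := ℚ)) h
    simp [Cat] at this
  apply mul_right_cancel₀ hC
  have h2 : (1 - PowerSeries.C (R := ℚ) b * X - X * Cat) * Cat
      = 1 - PowerSeries.C (R := ℚ) b * X * Cat := by
    linear_combination cat_eq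
  rw [mul_assoc, h2, Amul b, one_mul]
end

section
/- Fix an integer k ≥ 1. Suppose that for every m ∈ ℕ: D_{2k,1−k−m}(n) = (−1)^{binom(m+k,2)} · D_{2k,1−k+m}(n−m−k) for all n ≥ m+k, and D_{2k,1−k−m}(n) = 0 for all n with 0 < n < m+k. Then for every n ∈ ℕ, D_{2k,1−k}(k·n) = (−1)^{binom(k,2)·n}, and D_{2k,1−k}(N) = 0 for every N ∈ ℕ not divisible by k. -/
open Finset

/-- `C_{k,n} = (k/(2n+k)) C(2n+k,n)`, the coefficients of the `k`-th convolution power of the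
Catalan generating function, extended to `ℤ` by `0` for negative indices. -/
def convCat (k : ℕ) (n : ℤ) : ℚ :=
  if 0 ≤ n then
    (k : ℚ) / (2 * (n.toNat : ℚ) + (k : ℚ)) * ((2 * n.toNat + k).choose n.toNat : ℚ)
  else 0

/-- `D_{k,m}(n) = det (C_{k,m+i+j})_{i,j=0}^{n-1}`. -/
def Dk (k : ℕ) (m : ℤ) (n : ℕ) : ℚ :=
  Matrix.det (Matrix.of fun i j : Fin n => convCat k (m + ((i : ℕ) : ℤ) + ((j : ℕ) : ℤ)))

theorem stmt18 (k : ℕ) (hk : 1 ≤ k)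
    (h1 : ∀ m : ℕ, ∀ n : ℕ, m + k ≤ n →
      Dk (2 * k) (1 - (k : ℤ) - (m : ℤ)) n =
        (-1 : ℚ) ^ ((m + k).choose 2) * Dk (2 * k) (1 - (k : ℤ) + (m : ℤ)) (n - m - k))
    (h2 : ∀ m : ℕ, ∀ n : ℕ, 0 < n → n < m + k →
      Dk (2 * k) (1 - (k : ℤ) - (m : ℤ)) n = 0) :
    (∀ n : ℕ, Dk (2 * k) (1 - (k : ℤ)) (k * n) = (-1 : ℚ) ^ (k.choose 2 * n)) ∧
    (∀ N : ℕ, ¬ k ∣ N → Dk (2 * k) (1 - (k : ℤ)) N = 0) := by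
  have step : ∀ n : ℕ, k ≤ n →
      Dk (2 * k) (1 - (k : ℤ)) n =
        (-1 : ℚ) ^ (k.choose 2) * Dk (2 * k) (1 - (k : ℤ)) (n - k) := by
    intro n hn
    have := h1 0 n (by simpa using hn)
    simpa using this
  have vanish : ∀ n : ℕ, 0 < n → n < k → Dk (2 * k) (1 - (k : ℤ)) n = 0 := by
    intro n hn hnk
    have := h2 0 n hn (by simpa using hnk)
    simpa using this
  constructor
  · intro n
    induction n with
    | zero => simp [Dk, Matrix.det_fin_zero]
    | succ n ih =>
      have hle : k ≤ k * (n + 1) := Nat.le_mul_of_pos_right k (Nat.succ_pos n)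
      have hsub : k * (n + 1) - k = k * n := by
        rw [Nat.mul_succ]; omega
      rw [step (k * (n + 1)) hle, hsub, ih, Nat.mul_succ, pow_add]
      ring
  · intro N hN
    induction N using Nat.strong_induction_on with
    | _ N ih =>
      rcases lt_or_ge N k with h | h
      · exact vanish N (Nat.pos_of_ne_zero (fun h0 => hN (h0 ▸ dvd_zero k))) h
      · rw [step N h, ih (N - k) (by omega) (fun hd => hN (by
          obtain ⟨c, hc⟩ := hd
          exact ⟨c + 1, by rw [Nat.mul_succ]; omega⟩)), mul_zero]
end

section
/- Fix an integer k ≥ 1. Suppose that for every m ∈ ℕ: D_{2k−1,2−k−m}(n) = (−1)^{binom(m+k−1,2)} · D_{2k−1,m+1−k}(n−m−k+1) for all n ≥ m+k−1, and D_{2k−1,2−k−m}(n) = 0 for all n with 0 < n < m+k−1. Then for every n ∈ ℕ: D_{2k−1,2−k}((2k−1)·n) = (−1)^{(k−1)·n}, D_{2k−1,2−k}((2k−1)·n + k−1) = (−1)^{(k−1)·n + binom(k−1,2)}, and D_{2k−1,2−k}(N) = 0 for every N ∈ ℕ whose residue modulo 2k−1 is neither 0 nor k−1. -/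
open Finset

theorem stmt19 (k : ℕ) (hk : 1 ≤ k)
    (h1 : ∀ m : ℕ, ∀ n : ℕ, m + k - 1 ≤ n →
      Dk (2 * k - 1) (2 - (k : ℤ) - (m : ℤ)) n =
        (-1 : ℚ) ^ ((m + k - 1).choose 2) *
          Dk (2 * k - 1) ((m : ℤ) + 1 - (k : ℤ)) (n - (m + k - 1)))
    (h2 : ∀ m : ℕ, ∀ n : ℕ, 0 < n → n < m + k - 1 →
      Dk (2 * k - 1) (2 - (k : ℤ) - (m : ℤ)) n = 0) :
    (∀ n : ℕ, Dk (2 * k - 1) (2 - (k : ℤ)) ((2 * k - 1) * n) = (-1 : ℚ) ^ ((k - 1) * n)) ∧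
    (∀ n : ℕ, Dk (2 * k - 1) (2 - (k : ℤ)) ((2 * k - 1) * n + (k - 1)) =
      (-1 : ℚ) ^ ((k - 1) * n + (k - 1).choose 2)) ∧
    (∀ N : ℕ, N % (2 * k - 1) ≠ 0 → N % (2 * k - 1) ≠ k - 1 →
      Dk (2 * k - 1) (2 - (k : ℤ)) N = 0) := by

  -- combinatorial identity on binomial coefficients
  have hchoose : ∀ j : ℕ, j.choose 2 + (j + 1).choose 2 = j * j := by
    intro j
    induction j with
    | zero => simp
    | succ j ih =>
      have e : (j + 2).choose 2 = (j + 1) + (j + 1).choose 2 := by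
        rw [Nat.choose_succ_succ (j + 1) 1, Nat.choose_one_right]
      have e2 : (j + 1).choose 2 = j + j.choose 2 := by
        rw [Nat.choose_succ_succ j 1, Nat.choose_one_right]
      nlinarith [ih, e, e2]
  have hsign : ((-1 : ℚ)) ^ ((k - 1).choose 2) * (-1 : ℚ) ^ (k.choose 2)
      = (-1 : ℚ) ^ (k - 1) := by
    obtain ⟨j, rfl⟩ : ∃ j, k = j + 1 := ⟨k - 1, by omega⟩
    simp only [Nat.add_sub_cancel]
    rw [← pow_add, hchoose j]
    rcases Nat.even_or_odd j with h | h
    · rw [(h.mul_right j).neg_one_pow, h.neg_one_pow]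
    · rw [(h.mul h).neg_one_pow, h.neg_one_pow]
  have e1 : (2 : ℤ) - (k : ℤ) - ((1 : ℕ) : ℤ) = 1 - (k : ℤ) := by push_cast; ring
  have e2 : ((1 : ℕ) : ℤ) + 1 - (k : ℤ) = 2 - (k : ℤ) := by push_cast; ring
  have hD1 : ∀ n : ℕ, k - 1 ≤ n →
      Dk (2 * k - 1) (2 - (k : ℤ)) n
        = (-1 : ℚ) ^ ((k - 1).choose 2) * Dk (2 * k - 1) (1 - (k : ℤ)) (n - (k - 1)) := by
    intro n hn
    have h := h1 0 n (by omega)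
    simpa using h
  have hE1 : ∀ n : ℕ, k ≤ n →
      Dk (2 * k - 1) (1 - (k : ℤ)) n
        = (-1 : ℚ) ^ (k.choose 2) * Dk (2 * k - 1) (2 - (k : ℤ)) (n - k) := by
    intro n hn
    have h := h1 1 n (by omega)
    have e3 : 1 + k - 1 = k := by omega
    rw [e1, e2, e3] at h
    exact h
  have hDzero : ∀ n : ℕ, 0 < n → n < k - 1 → Dk (2 * k - 1) (2 - (k : ℤ)) n = 0 := by
    intro n h h'
    simpa using h2 0 n h (by omega)
  have hEzero : ∀ n : ℕ, 0 < n → n < k → Dk (2 * k - 1) (1 - (k : ℤ)) n = 0 := by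
    intro n h h'
    have := h2 1 n h (by omega)
    rwa [e1] at this
  have hD0 : Dk (2 * k - 1) (2 - (k : ℤ)) 0 = 1 := by
    simp [Dk, Matrix.det_isEmpty]
  have hE0 : Dk (2 * k - 1) (1 - (k : ℤ)) 0 = 1 := by
    simp [Dk, Matrix.det_isEmpty]
  have hstep : ∀ n : ℕ,
      Dk (2 * k - 1) (2 - (k : ℤ)) (n + (2 * k - 1))
        = (-1 : ℚ) ^ (k - 1) * Dk (2 * k - 1) (2 - (k : ℤ)) n := by
    intro n
    rw [hD1 (n + (2 * k - 1)) (by omega)]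
    have e : n + (2 * k - 1) - (k - 1) = n + k := by omega
    rw [e, hE1 (n + k) (by omega)]
    have e' : n + k - k = n := by omega
    rw [e', ← mul_assoc, hsign]
  have hDk1 : Dk (2 * k - 1) (2 - (k : ℤ)) (k - 1) = (-1 : ℚ) ^ ((k - 1).choose 2) := by
    rw [hD1 (k - 1) le_rfl, Nat.sub_self, hE0, mul_one]
  refine ⟨?_, ?_, ?_⟩
  · intro n
    induction n with
    | zero => simpa using hD0
    | succ n ih =>
      have e : (2 * k - 1) * (n + 1) = (2 * k - 1) * n + (2 * k - 1) := by ring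
      rw [e, hstep, ih, ← pow_add]
      congr 1
      ring
  · intro n
    induction n with
    | zero => simpa using hDk1
    | succ n ih =>
      have e : (2 * k - 1) * (n + 1) + (k - 1) = ((2 * k - 1) * n + (k - 1)) + (2 * k - 1) := by
        ring
      rw [e, hstep, ih, ← pow_add]
      congr 1
      ring
  · intro N
    induction N using Nat.strong_induction_on with
    | _ N ih =>
      intro h0 h1'
      by_cases hN : N < 2 * k - 1
      · have hmod : N % (2 * k - 1) = N := Nat.mod_eq_of_lt hN
        rw [hmod] at h0 h1'
        by_cases hN2 : N < k - 1
        · exact hDzero N (by omega) hN2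
        · rw [hD1 N (by omega), hEzero (N - (k - 1)) (by omega) (by omega), mul_zero]
      · have e : N = (N - (2 * k - 1)) + (2 * k - 1) := by omega
        have hmod : (N - (2 * k - 1)) % (2 * k - 1) = N % (2 * k - 1) := by
          conv_rhs => rw [e]
          exact (Nat.add_mod_right _ _).symm
        rw [e, hstep, ih (N - (2 * k - 1)) (by omega) (by rw [hmod]; exact h0)
          (by rw [hmod]; exact h1'), mul_zero]
end
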